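/- arXiv:2510.08860 — 10 statements merged into one kernel-verified Lean document; each statement's English description precedes it below -/
import Mathlib

section
/- Let κ ≤ λ < μ be infinite cardinals. If KH(κ,λ) fails and KH(κ,μ) holds, then KH(λ⁺,μ) holds. That is, if there is no slim (κ,λ)-family of cardinality λ⁺ but there is a slim (κ,μ)-family of cardinality μ⁺, then there is a slim (λ⁺,μ)-family of cardinality μ⁺. -/
open Cardinal

universe u

/-- `F` is a slim `(κ, ·)`-family of subsets of `L`: for every `x ⊆ L` of cardinality `< κ`,
the set of restrictions `{A ∩ x : A ∈ F}` has cardinality `< κ`. -/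
def SlimFamily (κ : Cardinal.{u}) {L : Type u} (F : Set (Set L)) : Prop :=
  ∀ x : Set L, #x < κ → #((fun A => A ∩ x) '' F) < κ

/-- `KH κ λ μ`: there is a slim `(κ, λ)`-family of cardinality `μ`, where subsets of the
cardinal `λ` are represented as subsets of the canonical type `λ.ord.toType` of cardinality
`λ`. -/
def KH (κ lam μ : Cardinal.{u}) : Prop :=
  ∃ F : Set (Set lam.ord.ToType), SlimFamily κ F ∧ #F = μ

/-- If `κ ≤ λ < μ` are infinite cardinals, `KH(κ,λ)` fails and `KH(κ,μ)` holds, then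
`KH(λ⁺,μ)` holds. -/
theorem stmt0 (κ lam μ : Cardinal.{u}) (hκ : ℵ₀ ≤ κ) (hkl : κ ≤ lam) (hlm : lam < μ)
    (h1 : ¬ KH κ lam (Order.succ lam)) (h2 : KH κ μ (Order.succ μ)) :
    KH (Order.succ lam) μ (Order.succ μ) := by
  obtain ⟨F, hFslim, hFcard⟩ := h2
  refine ⟨F, ?_, hFcard⟩
  intro x hx
  rw [Order.lt_succ_iff] at hx ⊢
  by_contra hcon
  apply h1
  have hge : Order.succ lam ≤ #((fun A => A ∩ x) '' F) :=
    Order.succ_le_of_lt (not_le.mp hcon)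
  obtain ⟨G, hGsub, hGcard⟩ := Cardinal.le_mk_iff_exists_subset.mp hge
  -- an embedding of x into the canonical type of cardinality lam
  have hxle : #x ≤ #(lam.ord.ToType) := by rw [Cardinal.mk_ord_toType]; exact hx
  obtain ⟨f⟩ := (Cardinal.le_def _ _).mp hxle
  -- transport the family G along f
  set Φ : Set μ.ord.ToType → Set lam.ord.ToType :=
    fun A => f '' {a : x | ↑a ∈ A} with hΦ
  have hsubx : ∀ A ∈ G, A ⊆ x := by
    intro A hA
    obtain ⟨B, _, rfl⟩ := hGsub hA
    exact Set.inter_subset_right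
  have hΦsub : ∀ A ∈ G, ∀ B ∈ G, Φ A = Φ B → A ⊆ B := by
    intro A hA B hB h m hm
    have hmx : m ∈ x := hsubx A hA hm
    have h1 : f ⟨m, hmx⟩ ∈ Φ B := h ▸ ⟨⟨m, hmx⟩, hm, rfl⟩
    obtain ⟨b, hb, hfb⟩ := h1
    have hbm : b = ⟨m, hmx⟩ := f.injective hfb
    subst hbm
    exact hb
  have hΦinj : Set.InjOn Φ G := fun A hA B hB h =>
    Set.Subset.antisymm (hΦsub A hA B hB h) (hΦsub B hB A hA h.symm)
  refine ⟨Φ '' G, ?_, ?_⟩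
  · -- slimness of the transported family
    intro z hz
    set w : Set μ.ord.ToType := Subtype.val '' (f ⁻¹' z) with hw
    have hwx : w ⊆ x := by rintro m ⟨a, _, rfl⟩; exact a.2
    have hwcard : #w < κ := by
      refine lt_of_le_of_lt ?_ hz
      calc #w ≤ #(f ⁻¹' z) := Cardinal.mk_image_le
        _ ≤ #z := Cardinal.mk_preimage_of_injective _ _ f.injective
    have key : (fun C => C ∩ z) '' (Φ '' G)
        = (fun B => f '' {a : x | ↑a ∈ B ∧ f a ∈ z}) '' ((fun A => A ∩ w) '' G) := by
      rw [Set.image_image, Set.image_image]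
      apply Set.image_congr
      intro A _
      ext m
      simp only [hΦ, Set.mem_inter_iff, Set.mem_image, Set.mem_setOf_eq]
      constructor
      · rintro ⟨⟨a, ha, rfl⟩, hmz⟩
        exact ⟨a, ⟨⟨ha, ⟨a, hmz, rfl⟩⟩, hmz⟩, rfl⟩
      · rintro ⟨a, ⟨⟨ha, -⟩, hz'⟩, rfl⟩
        exact ⟨⟨a, ha, rfl⟩, hz'⟩
    have hkey2 : (fun A => A ∩ w) '' G ⊆ (fun A => A ∩ w) '' F := by
      rintro _ ⟨A, hA, rfl⟩
      obtain ⟨B, hB, rfl⟩ := hGsub hA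
      exact ⟨B, hB, by show B ∩ w = B ∩ x ∩ w; rw [Set.inter_assoc, Set.inter_eq_right.mpr hwx]⟩
    calc #((fun C => C ∩ z) '' (Φ '' G))
        = #((fun B => f '' {a : x | ↑a ∈ B ∧ f a ∈ z}) '' ((fun A => A ∩ w) '' G)) := by
          rw [key]
      _ ≤ #((fun A => A ∩ w) '' G) := Cardinal.mk_image_le
      _ ≤ #((fun A => A ∩ w) '' F) := Cardinal.mk_le_mk_of_subset hkey2
      _ < κ := hFslim w hwcard
  · rw [Cardinal.mk_image_eq_of_injOn _ _ hΦinj, hGcard]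
end

section
/- Let κ ≤ λ < μ be infinite cardinals and suppose there is no slim (κ,λ)-family of cardinality λ⁺. Then every slim (κ,μ)-family F is also a slim (λ⁺,μ)-family; that is, |F↾y| ≤ λ for every y ⊆ μ with |y| ≤ λ. -/
open Cardinal

universe u

/-- If `κ ≤ λ < μ` are infinite cardinals and there is no slim `(κ,λ)`-family of
cardinality `λ⁺`, then every slim `(κ,μ)`-family `F` is also a slim `(λ⁺,μ)`-family:
`|F↾y| ≤ λ` for every `y ⊆ μ` with `|y| ≤ λ`. Subsets of a cardinal `ν` are represented
as subsets of the canonical type `ν.ord.ToType`. -/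
theorem stmt1 (κ lam μ : Cardinal.{u}) (hκ : ℵ₀ ≤ κ) (hkl : κ ≤ lam) (hlm : lam < μ)
    (h1 : ¬ ∃ F : Set (Set lam.ord.ToType), SlimFamily κ F ∧ #F = Order.succ lam)
    (F : Set (Set μ.ord.ToType)) (hF : SlimFamily κ F) :
    ∀ y : Set μ.ord.ToType, #y ≤ lam → #((fun A => A ∩ y) '' F) ≤ lam := by
  intro y hy
  by_contra hcon
  push_neg at hcon
  obtain ⟨G, hGsub, hGcard⟩ :=
    Cardinal.le_mk_iff_exists_subset.mp (Order.succ_le_of_lt hcon)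
  -- an injection from y into lam.ord.ToType
  have hle : #(↥y) ≤ #lam.ord.ToType := by rwa [Cardinal.mk_ord_toType]
  obtain ⟨g⟩ := (Cardinal.le_def _ _).mp hle
  -- transport sets A ⊆ y to subsets of lam.ord.ToType
  set T : Set μ.ord.ToType → Set lam.ord.ToType :=
    fun A => g '' (Subtype.val ⁻¹' A) with hTdef
  have key : ∀ A : Set μ.ord.ToType, A ⊆ y →
      (Subtype.val : ↥y → μ.ord.ToType) '' (Subtype.val ⁻¹' A) = A := by
    intro A hA
    exact Set.image_preimage_eq_of_subset (by rwa [Subtype.range_coe])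
  have hTinj : Set.InjOn T G := by
    intro A hA B hB hAB
    have h2 : (Subtype.val ⁻¹' A : Set ↥y) = Subtype.val ⁻¹' B :=
      Set.image_injective.mpr g.injective hAB
    have hA' : A ⊆ y := by
      obtain ⟨C, _, rfl⟩ := hGsub hA; exact Set.inter_subset_right
    have hB' : B ⊆ y := by
      obtain ⟨C, _, rfl⟩ := hGsub hB; exact Set.inter_subset_right
    rw [← key A hA', ← key B hB', h2]
  have hcard : #(T '' G) = Order.succ lam := by
    rw [Cardinal.mk_image_eq_of_injOn T G hTinj, hGcard]
  have hslim : SlimFamily κ (T '' G) := by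
    intro x hx
    set x' : Set μ.ord.ToType := Subtype.val '' (g ⁻¹' x) with hx'def
    have hx'card : #(↥x') < κ := by
      refine lt_of_le_of_lt ?_ hx
      refine le_trans Cardinal.mk_image_le ?_
      exact Cardinal.mk_preimage_of_injective g x g.injective
    have hx'sub : x' ⊆ y := by
      rintro _ ⟨a, _, rfl⟩; exact a.2
    -- pointwise: T A ∩ x = T (A ∩ x')
    have hpt : ∀ A : Set μ.ord.ToType, T A ∩ x = T (A ∩ x') := by
      intro A
      have h3 : (Subtype.val ⁻¹' x' : Set ↥y) = g ⁻¹' x := by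
        rw [hx'def, Set.preimage_image_eq _ Subtype.val_injective]
      simp only [hTdef, Set.preimage_inter, h3, Set.image_inter_preimage]
    have himg : (fun A => A ∩ x) '' (T '' G) = T '' ((fun A => A ∩ x') '' G) := by
      rw [← Set.image_comp, ← Set.image_comp]
      apply Set.image_congr
      intro A _
      exact hpt A
    have hsub2 : (fun A => A ∩ x') '' G ⊆ (fun A => A ∩ x') '' F := by
      rintro _ ⟨B, hB, rfl⟩
      obtain ⟨C, hC, rfl⟩ := hGsub hB
      refine ⟨C, hC, ?_⟩
      simp only []
      rw [Set.inter_assoc, Set.inter_eq_right.mpr hx'sub]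
    calc #((fun A => A ∩ x) '' (T '' G))
        = #(T '' ((fun A => A ∩ x') '' G)) := by rw [himg]
      _ ≤ #((fun A => A ∩ x') '' G) := Cardinal.mk_image_le
      _ ≤ #((fun A => A ∩ x') '' F) := Cardinal.mk_le_mk_of_subset hsub2
      _ < κ := hF x' hx'card
  exact h1 ⟨T '' G, hslim, hcard⟩
end

section
/- Let κ ≤ λ be uncountable cardinals and μ a cardinal. Then KH(κ,λ,μ) holds if and only if there exists a slim (κ,λ)-tree with at least μ branches. -/
open Cardinal

universe u

/-- For uncountable cardinals `κ ≤ λ` and any cardinal `μ`, `KH(κ,λ,μ)` holds iff there is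
a slim `(κ,λ)`-tree with at least `μ` branches. A `(κ,λ)`-tree assigns to each `x ⊆ λ`
with `|x| < κ` a nonempty set `F x` of functions `x → 2`, downward closed under
restriction; it is slim if `|F x| < κ` for all such `x`; a branch is a `b : λ → 2` all of
whose restrictions to small sets lie in the tree. -/
theorem stmt7 (κ lam μ : Cardinal.{u}) (hκ : ℵ₀ < κ) (hkl : κ ≤ lam) :
    KH κ lam μ ↔
    ∃ F : (x : Set lam.ord.ToType) → Set (↥x → Bool),
      (∀ x : Set lam.ord.ToType, #x < κ → (F x).Nonempty) ∧
      (∀ x y : Set lam.ord.ToType, #y < κ → ∀ hxy : x ⊆ y, ∀ s ∈ F y,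
        (fun a : ↥x => s ⟨a.1, hxy a.2⟩) ∈ F x) ∧
      (∀ x : Set lam.ord.ToType, #x < κ → #(F x) < κ) ∧
      μ ≤ #{b : lam.ord.ToType → Bool |
        ∀ x : Set lam.ord.ToType, #x < κ → (fun a : ↥x => b a.1) ∈ F x} := by
  classical
  constructor
  · rintro ⟨F, hslim, hcard⟩
    refine ⟨fun x => insert (fun _ => false)
        ((fun A => fun a : ↥x => decide (a.1 ∈ A)) '' F), ?_, ?_, ?_, ?_⟩
    · intro x _
      exact ⟨_, Set.mem_insert _ _⟩
    · rintro x y hy hxy s hs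
      rcases Set.mem_insert_iff.1 hs with rfl | ⟨A, hA, rfl⟩
      · exact Set.mem_insert _ _
      · exact Set.mem_insert_of_mem _ ⟨A, hA, rfl⟩
    · intro x hx
      have himg : (fun A => fun a : ↥x => decide (a.1 ∈ A)) '' F
          = (fun S => fun a : ↥x => decide (a.1 ∈ S)) '' ((fun A => A ∩ x) '' F) := by
        rw [← Set.image_comp]
        apply Set.image_congr
        intro A _
        funext a
        simp [Function.comp, a.2]
      calc #(insert (fun _ => false) ((fun A => fun a : ↥x => decide (a.1 ∈ A)) '' F) : Set (↥x → Bool))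
          ≤ #((fun A => fun a : ↥x => decide (a.1 ∈ A)) '' F) + 1 := Cardinal.mk_insert_le
        _ < κ := by
            apply Cardinal.add_lt_of_lt hκ.le
            · rw [himg]
              exact (Cardinal.mk_image_le).trans_lt (hslim x hx)
            · exact lt_trans Cardinal.one_lt_aleph0 hκ
    · rw [← hcard]
      refine Cardinal.mk_le_of_injective
        (f := fun A : ↥F => (⟨fun a => decide (a ∈ (A : Set lam.ord.ToType)), ?_⟩ :
          {b : lam.ord.ToType → Bool | ∀ x : Set lam.ord.ToType, #x < κ →
            (fun a : ↥x => b a.1) ∈ insert (fun _ => false)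
              ((fun A => fun a : ↥x => decide (a.1 ∈ A)) '' F)})) ?_
      · intro x hx
        exact Set.mem_insert_of_mem _ ⟨A.1, A.2, rfl⟩
      · intro A₁ A₂ h
        have h' := congrArg Subtype.val h
        apply Subtype.ext
        ext a
        have := congrFun h' a
        simpa using this
  · rintro ⟨T, hne, hdc, hslim, hμ⟩
    set B := {b : lam.ord.ToType → Bool | ∀ x : Set lam.ord.ToType, #x < κ →
      (fun a : ↥x => b a.1) ∈ T x} with hB
    obtain ⟨p, hp⟩ := Cardinal.le_mk_iff_exists_set.1 hμ
    have hinj : Function.Injective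
        (fun b : ↥B => {a | (b : lam.ord.ToType → Bool) a = true}) := by
      intro b₁ b₂ h
      have h' : {a | (b₁ : lam.ord.ToType → Bool) a = true}
          = {a | (b₂ : lam.ord.ToType → Bool) a = true} := h
      apply Subtype.ext
      funext a
      have h2 : ((b₁ : lam.ord.ToType → Bool) a = true ↔
          (b₂ : lam.ord.ToType → Bool) a = true) := Set.ext_iff.mp h' a
      exact Bool.eq_iff_iff.mpr h2
    refine ⟨(fun b : ↥B => {a | (b : lam.ord.ToType → Bool) a = true}) '' p, ?_, ?_⟩
    · intro x hx
      refine lt_of_le_of_lt (Cardinal.mk_le_of_injective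
        (f := fun S : ↥((fun A => A ∩ x) ''
            ((fun b : ↥B => {a | (b : lam.ord.ToType → Bool) a = true}) '' p)) =>
          (⟨fun a : ↥x => decide (a.1 ∈ (S : Set lam.ord.ToType)), ?_⟩ : ↥(T x))) ?_)
        (hslim x hx)
      · obtain ⟨A, ⟨b, hbp, rfl⟩, hSA⟩ := S.2
        have hSA' : ({a | (b : lam.ord.ToType → Bool) a = true} ∩ x)
            = (S : Set lam.ord.ToType) := hSA
        have heq : (fun a : ↥x => decide (a.1 ∈ (S : Set lam.ord.ToType)))
            = fun a : ↥x => (b : lam.ord.ToType → Bool) a.1 := by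
          funext a
          rw [← hSA']
          by_cases hb : (b : lam.ord.ToType → Bool) a.1 = true
          · rw [hb]
            simp only [decide_eq_true_eq]
            exact ⟨hb, a.2⟩
          · rw [Bool.not_eq_true] at hb
            rw [hb]
            simp only [decide_eq_false_iff_not]
            exact fun h => Bool.false_ne_true (hb ▸ h.1)
        rw [heq]
        exact b.2 x hx
      · intro S₁ S₂ h
        have hsub : ∀ S : ↥((fun A => A ∩ x) ''
            ((fun b : ↥B => {a | (b : lam.ord.ToType → Bool) a = true}) '' p)),
            (S : Set lam.ord.ToType) ⊆ x := by
          rintro ⟨S, A, hA, rfl⟩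
          exact Set.inter_subset_right
        have h' := congrArg Subtype.val h
        apply Subtype.ext
        ext a
        by_cases ha : a ∈ x
        · have := congrFun h' ⟨a, ha⟩
          simpa using this
        · constructor
          · intro hmem; exact absurd (hsub S₁ hmem) ha
          · intro hmem; exact absurd (hsub S₂ hmem) ha
    · rw [Cardinal.mk_image_eq hinj, hp]
end

section
/- Let κ and λ be infinite cardinals with κ⁺ ≤ λ. If the Chang transfer property (λ⁺,λ) ↠ (κ⁺,κ) holds for the language with one unary relation symbol and one binary relation symbol, then KH(κ⁺,λ) fails: there is no slim (κ⁺,λ)-family of cardinality λ⁺. -/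
open Cardinal FirstOrder

universe u

/-- The first-order language with one unary relation symbol and one binary relation
symbol (and no function symbols). -/
def LangUE : FirstOrder.Language :=
  { Functions := fun _ => Empty
    Relations := fun n => match n with
      | 1 => Unit
      | 2 => Unit
      | _ => Empty }

/-- The unary relation symbol `U` of `LangUE`. -/
def USymb : LangUE.Relations 1 := Unit.unit

/-- The Chang transfer property `(λ⁺,λ) ↠ (κ⁺,κ)` for the language `LangUE`: every
`LangUE`-structure `M` with `|M| = λ⁺` and `|U^M| = λ` has an elementary substructure `N`
with `|N| = κ⁺` and `|U^M ∩ N| = κ`. -/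
def ChangTransfer (κ lam : Cardinal.{u}) : Prop :=
  ∀ (M : Type u) (_ : LangUE.Structure M),
    #M = Order.succ lam →
    #{m : M | Language.Structure.RelMap USymb ![m]} = lam →
    ∃ N : LangUE.ElementarySubstructure M,
      #(N.toSubstructure : Set M) = Order.succ κ ∧
      #((N.toSubstructure : Set M) ∩ {m : M | Language.Structure.RelMap USymb ![m]} :
        Set M) = κ

def ESymb : LangUE.Relations 2 := Unit.unit

def MStruct {L : Type u} (F : Set (Set L)) : LangUE.Structure (↥F ⊕ L) where
  funMap := fun {_} f _ => Empty.elim f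
  RelMap := fun {n} r =>
    match n, r with
    | 0, _ => fun _ => False
    | 1, _ => fun v => ∃ z : L, v 0 = Sum.inr z
    | 2, _ => fun v => ∃ (A : ↥F) (z : L), v 0 = Sum.inl A ∧ v 1 = Sum.inr z ∧ z ∈ (A : Set L)
    | (_+3), _ => fun _ => False

theorem relU {L : Type u} (F : Set (Set L)) (v : Fin 1 → (↥F ⊕ L)) :
    @Language.Structure.RelMap LangUE _ (MStruct F) 1 USymb v ↔ ∃ z : L, v 0 = Sum.inr z :=
  Iff.rfl

theorem relE {L : Type u} (F : Set (Set L)) (v : Fin 2 → (↥F ⊕ L)) :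
    @Language.Structure.RelMap LangUE _ (MStruct F) 2 ESymb v ↔
      ∃ (A : ↥F) (z : L), v 0 = Sum.inl A ∧ v 1 = Sum.inr z ∧ z ∈ (A : Set L) :=
  Iff.rfl

open Language in
def distFormula : LangUE.Formula (Fin 2) :=
  BoundedFormula.ex
    ((USymb.boundedFormula₁ (Term.var (Sum.inr 0))) ⊓
      ∼(BoundedFormula.iff
          (ESymb.boundedFormula₂ (Term.var (Sum.inl 0)) (Term.var (Sum.inr 0)))
          (ESymb.boundedFormula₂ (Term.var (Sum.inl 1)) (Term.var (Sum.inr 0)))))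

open Language in
theorem realize_distFormula {M : Type*} [LangUE.Structure M] (a b : M) :
    distFormula.Realize ![a, b] ↔
      ∃ c : M, Structure.RelMap USymb ![c] ∧
        ¬ (Structure.RelMap ESymb ![a, c] ↔ Structure.RelMap ESymb ![b, c]) := by
  simp only [distFormula, Formula.Realize, BoundedFormula.realize_ex,
    BoundedFormula.realize_inf, BoundedFormula.realize_not, BoundedFormula.realize_iff,
    BoundedFormula.realize_rel₁, BoundedFormula.realize_rel₂, Term.realize_var, Sum.elim_inl,
    Sum.elim_inr, Fin.snoc_zero, Matrix.cons_val_zero, Matrix.cons_val_one, Matrix.head_cons]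

open Language in
theorem relMap_substructure {L : Language} {M : Type*} [L.Structure M] (S : L.Substructure M)
    {n : ℕ} (r : L.Relations n) (v : Fin n → S) :
    Structure.RelMap r v ↔ Structure.RelMap r (fun i => (v i : M)) :=
  Iff.rfl

theorem keyLemma {L : Type u} (κ lam : Cardinal.{u}) (hκ : ℵ₀ ≤ κ) (hlam : ℵ₀ ≤ lam)
    (hchang : ChangTransfer κ lam) (hmkL : #L = lam) (F : Set (Set L))
    (hslim : SlimFamily (Order.succ κ) F) (hF : #F = Order.succ lam) : False := by
  have hsucκ : ℵ₀ ≤ Order.succ κ := hκ.trans (Order.le_succ κ)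
  letI inst : LangUE.Structure (↥F ⊕ L) := MStruct F
  have hM : #(↥F ⊕ L) = Order.succ lam := by
    rw [Cardinal.mk_sum, Cardinal.lift_id, Cardinal.lift_id, hF, hmkL]
    exact Cardinal.add_eq_left (hlam.trans (Order.le_succ lam)) (Order.le_succ lam)
  have hUset : {m : ↥F ⊕ L | Language.Structure.RelMap USymb ![m]} = Set.range Sum.inr := by
    ext m
    simp only [Set.mem_setOf_eq, relU, Set.mem_range, Matrix.cons_val_zero]
    exact ⟨fun ⟨z, h⟩ => ⟨z, h.symm⟩, fun ⟨z, h⟩ => ⟨z, h.symm⟩⟩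
  have hU : #{m : ↥F ⊕ L | Language.Structure.RelMap USymb ![m]} = lam := by
    rw [hUset, Cardinal.mk_range_eq _ Sum.inr_injective, hmkL]
  obtain ⟨N, hN, hNU⟩ := hchang _ inst hM hU
  set x : Set L := Sum.inr ⁻¹' (N.toSubstructure : Set (↥F ⊕ L)) with hxdef
  set G : Set ↥F := Sum.inl ⁻¹' (N.toSubstructure : Set (↥F ⊕ L)) with hGdef
  have hinter : ((N.toSubstructure : Set (↥F ⊕ L)) ∩
      {m : ↥F ⊕ L | Language.Structure.RelMap USymb ![m]}) = Sum.inr '' x := by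
    rw [hUset]
    ext m
    rcases m with A | z
    · simp [x]
    · simp [x]
  have hx : #x = κ := by
    rw [← hNU, hinter, Cardinal.mk_image_eq Sum.inr_injective]
  have hsplit : (N.toSubstructure : Set (↥F ⊕ L)) = Sum.inl '' G ∪ Sum.inr '' x := by
    ext m
    rcases m with A | z
    · simp [G, x]
    · simp [G, x]
  have hGcard : Order.succ κ ≤ #G := by
    by_contra hlt
    push_neg at hlt
    have : #(N.toSubstructure : Set (↥F ⊕ L)) < Order.succ κ := by
      rw [hsplit, Cardinal.mk_union_of_disjoint, Cardinal.mk_image_eq Sum.inl_injective,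
        Cardinal.mk_image_eq Sum.inr_injective]
      · exact Cardinal.add_lt_of_lt hsucκ hlt (hx ▸ Order.lt_succ κ)
      · rw [Set.disjoint_left]
        rintro m ⟨A, _, rfl⟩ ⟨z, _, h⟩
        exact Sum.inl_ne_inr h.symm
    rw [hN] at this
    exact lt_irrefl _ this
  have hinj : Function.Injective (fun A : ↥G => ((A : ↥F) : Set L) ∩ x) := by
    rintro A B hAB
    by_contra hne
    have hsetne : ((A : ↥F) : Set L) ≠ ((B : ↥F) : Set L) := by
      intro h
      exact hne (Subtype.ext (Subtype.ext h))
    have hz : ∃ z : L, ¬ (z ∈ ((A : ↥F) : Set L) ↔ z ∈ ((B : ↥F) : Set L)) := by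
      by_contra h
      push_neg at h
      exact hsetne (Set.ext h)
    obtain ⟨z, hz⟩ := hz
    have hMreal : distFormula.Realize ![(Sum.inl (A : ↥F) : ↥F ⊕ L), Sum.inl (B : ↥F)] := by
      rw [realize_distFormula]
      refine ⟨Sum.inr z, (relU F _).2 ⟨z, rfl⟩, ?_⟩
      rw [relE, relE]
      intro hiff
      apply hz
      constructor
      · intro hzA
        obtain ⟨A', z', hA', hz', hmem⟩ := hiff.1 ⟨(A : ↥F), z, rfl, rfl, hzA⟩
        obtain rfl := Sum.inl_injective hA'
        obtain rfl := Sum.inr_injective hz'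
        exact hmem
      · intro hzB
        obtain ⟨B', z', hB', hz', hmem⟩ := hiff.2 ⟨(B : ↥F), z, rfl, rfl, hzB⟩
        obtain rfl := Sum.inl_injective hB'
        obtain rfl := Sum.inr_injective hz'
        exact hmem
    have hAmem : (Sum.inl (A : ↥F) : ↥F ⊕ L) ∈ N.toSubstructure := A.2
    have hBmem : (Sum.inl (B : ↥F) : ↥F ⊕ L) ∈ N.toSubstructure := B.2
    set a : ↥N.toSubstructure := ⟨Sum.inl (A : ↥F), hAmem⟩ with hadef
    set b : ↥N.toSubstructure := ⟨Sum.inl (B : ↥F), hBmem⟩ with hbdef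
    have hcomp : ((↑) : ↥N.toSubstructure → ↥F ⊕ L) ∘ ![a, b] =
        ![(Sum.inl (A : ↥F) : ↥F ⊕ L), Sum.inl (B : ↥F)] := by
      funext i
      fin_cases i <;> rfl
    have hNreal : distFormula.Realize ![a, b] := by
      rw [← N.isElementary distFormula ![a, b], hcomp]
      exact hMreal
    rw [realize_distFormula] at hNreal
    obtain ⟨c, hcU, hcE⟩ := hNreal
    rw [relMap_substructure] at hcU
    rw [relU] at hcU
    obtain ⟨w, hw⟩ := hcU
    simp only [Matrix.cons_val_zero] at hw
    have hwx : w ∈ x := by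
      rw [hxdef]
      simp only [Set.mem_preimage]
      rw [← hw]
      exact c.2
    rw [relMap_substructure, relMap_substructure] at hcE
    rw [relE, relE] at hcE
    apply hcE
    have e0a : ((![a, c] 0 : ↥N.toSubstructure) : ↥F ⊕ L) = Sum.inl (A : ↥F) := rfl
    have e1 : ((![a, c] 1 : ↥N.toSubstructure) : ↥F ⊕ L) = Sum.inr w := hw
    have e0b : ((![b, c] 0 : ↥N.toSubstructure) : ↥F ⊕ L) = Sum.inl (B : ↥F) := rfl
    have e1b : ((![b, c] 1 : ↥N.toSubstructure) : ↥F ⊕ L) = Sum.inr w := hw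
    have hmemiff : w ∈ ((A : ↥F) : Set L) ↔ w ∈ ((B : ↥F) : Set L) := by
      have hAB' : ((A : ↥F) : Set L) ∩ x = ((B : ↥F) : Set L) ∩ x := hAB
      constructor
      · intro h
        have hmem : w ∈ ((A : ↥F) : Set L) ∩ x := ⟨h, hwx⟩
        rw [hAB'] at hmem
        exact hmem.1
      · intro h
        have hmem : w ∈ ((B : ↥F) : Set L) ∩ x := ⟨h, hwx⟩
        rw [← hAB'] at hmem
        exact hmem.1
    constructor
    · rintro ⟨A', z', h0, h1, hmem⟩
      rw [e0a] at h0
      rw [e1] at h1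
      obtain rfl := Sum.inl_injective h0
      obtain rfl := Sum.inr_injective h1
      exact ⟨(B : ↥F), w, e0b, e1b, hmemiff.1 hmem⟩
    · rintro ⟨B', z', h0, h1, hmem⟩
      rw [e0b] at h0
      rw [e1b] at h1
      obtain rfl := Sum.inl_injective h0
      obtain rfl := Sum.inr_injective h1
      exact ⟨(A : ↥F), w, e0a, e1, hmemiff.2 hmem⟩
  have himage : Order.succ κ ≤ #((fun A => A ∩ x) '' F) := by
    refine hGcard.trans (Cardinal.mk_le_of_injective (f := fun A : ↥G =>
      (⟨((A : ↥F) : Set L) ∩ x, ⟨((A : ↥F) : Set L), (A : ↥F).2, rfl⟩⟩ :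
        ((fun A => A ∩ x) '' F))) ?_)
    intro A B h
    exact hinj (congrArg Subtype.val h)
  exact absurd (hslim x (hx ▸ Order.lt_succ κ)) (not_lt.2 himage)

/-- If `κ` is infinite, `κ⁺ ≤ λ`, and the Chang transfer property `(λ⁺,λ) ↠ (κ⁺,κ)`
holds, then `KH(κ⁺,λ)` fails: there is no slim `(κ⁺,λ)`-family of cardinality `λ⁺`.
Subsets of `λ` are represented as subsets of the canonical type `λ.ord.toType`. -/
theorem stmt8 (κ lam : Cardinal.{u}) (hκ : ℵ₀ ≤ κ) (hkl : Order.succ κ ≤ lam)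
    (hchang : ChangTransfer κ lam) :
    ¬ ∃ F : Set (Set lam.ord.ToType),
        SlimFamily (Order.succ κ) F ∧ #F = Order.succ lam := by
  rintro ⟨F, hslim, hF⟩
  exact keyLemma κ lam hκ (hκ.trans ((Order.le_succ κ).trans hkl)) hchang
    (Cardinal.mk_ord_toType lam) F hslim hF
end

section
/- Let n < ω and let A ⊆ ω be infinite. Suppose (f_α : α < ℵ_{ω+1}) is a scale on ∏_{k∈A} ℵ_k such that every ordinal α < ℵ_{ω+1} with cf(α) = ℵ_{n+1} is good for the scale. Then KH(ℵ_{n+1}, ℵ_ω) holds: there exists a slim (ℵ_{n+1}, ℵ_ω)-family of cardinality ℵ_{ω+1}. -/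
open Cardinal Ordinal

universe u

/-- `f` is a member of `∏_{k ∈ A} ℵ_k`: `f k < ℵ_k` for every `k ∈ A`
(values off `A` are irrelevant). -/
def MemPiAleph (A : Set ℕ) (f : ℕ → Ordinal.{u}) : Prop :=
  ∀ k ∈ A, f k < (aleph k).ord

/-- `f <* g`: `f k < g k` for all but finitely many `k ∈ A`. -/
def LtStar (A : Set ℕ) (f g : ℕ → Ordinal.{u}) : Prop :=
  {k ∈ A | ¬ f k < g k}.Finite

/-- `(f α : α < ℵ_{ω+1})` is a scale on `∏_{k ∈ A} ℵ_k`: each `f α` is a member of the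
product, the sequence is `<*`-increasing, and it is `<*`-cofinal in the product. -/
def IsScale (A : Set ℕ) (f : Ordinal.{u} → ℕ → Ordinal.{u}) : Prop :=
  (∀ α < (aleph (omega0 + 1)).ord, MemPiAleph A (f α)) ∧
  (∀ α β : Ordinal.{u}, α < β → β < (aleph (omega0 + 1)).ord → LtStar A (f α) (f β)) ∧
  (∀ g : ℕ → Ordinal.{u}, MemPiAleph A g →
    ∃ α < (aleph (omega0 + 1)).ord, LtStar A g (f α))

/-- `α` is a good point for the scale `f`: for every `C` unbounded in `α` there are
`D ⊆ C` unbounded in `α` and `k₀ < ω` such that for all `β < η` in `D` and all `k ∈ A`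
with `k ≥ k₀` we have `f β k < f η k`. -/
def IsGoodPoint (A : Set ℕ) (f : Ordinal.{u} → ℕ → Ordinal.{u}) (α : Ordinal.{u}) : Prop :=
  ∀ C : Set Ordinal.{u}, C ⊆ Set.Iio α → (∀ β < α, ∃ γ ∈ C, β ≤ γ) →
    ∃ D ⊆ C, (∀ β < α, ∃ γ ∈ D, β ≤ γ) ∧
      ∃ k₀ : ℕ, ∀ β ∈ D, ∀ η ∈ D, β < η → ∀ k ∈ A, k₀ ≤ k → f β k < f η k

/-! ### Auxiliary constructions -/

lemma Stmt9.exists_pair_emb :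
    Nonempty ((ULift.{u} ℕ × (aleph omega0.{u}).ord.ToType) ↪ (aleph omega0.{u}).ord.ToType) := by
  have h : #(ULift.{u} ℕ × (aleph omega0.{u}).ord.ToType) ≤ #((aleph omega0.{u}).ord.ToType) := by
    have hT : #((aleph omega0.{u}).ord.ToType) = aleph omega0.{u} := by rw [mk_toType, card_ord]
    simp only [mk_prod, mk_uLift, mk_nat, Cardinal.lift_id, lift_aleph0, hT]
    calc ℵ₀ * aleph omega0 ≤ aleph omega0 * aleph omega0 :=
          mul_le_mul_left (aleph0_le_aleph _) _
      _ = aleph omega0 := Cardinal.mul_eq_self (aleph0_le_aleph _)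
  exact (Cardinal.le_def _ _).1 h

/-- Coding of a pair `(k, ξ)` with `ξ < ℵ_ω` as an element of the canonical type of
cardinality `ℵ_ω`. -/
noncomputable def Stmt9.code (k : ℕ) (ξ : Ordinal.{u}) (h : ξ < (aleph omega0).ord) :
    (aleph omega0).ord.ToType :=
  Stmt9.exists_pair_emb.{u}.some (ULift.up k, ToType.mk ⟨ξ, h⟩)

lemma Stmt9.code_inj {k k' : ℕ} {ξ ξ' : Ordinal.{u}} {h : ξ < (aleph omega0).ord}
    {h' : ξ' < (aleph omega0).ord} (e : Stmt9.code k ξ h = Stmt9.code k' ξ' h') :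
    k = k' ∧ ξ = ξ' := by
  have := Stmt9.exists_pair_emb.{u}.some.injective e
  have h1 := congrArg Prod.fst this
  have h2 := congrArg Prod.snd this
  simp only at h1 h2
  refine ⟨congrArg ULift.down h1, ?_⟩
  have := (ToType.mk).injective h2
  exact congrArg Subtype.val this

/-- The set of subsets of (the canonical type of cardinality) `ℵ_ω` coding the function
`f α` on `A`. -/
def Stmt9.Aset (A : Set ℕ) (f : Ordinal.{u} → ℕ → Ordinal.{u}) (α : Ordinal.{u}) :
    Set (aleph omega0).ord.ToType :=
  {t | ∃ k ∈ A, ∃ h : f α k < (aleph omega0).ord, t = Stmt9.code k (f α k) h}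

lemma Stmt9.bound {A : Set ℕ} {f : Ordinal.{u} → ℕ → Ordinal.{u}} (hf : IsScale A f)
    {α : Ordinal.{u}} (hα : α < (aleph (omega0 + 1)).ord) {k : ℕ} (hk : k ∈ A) :
    f α k < (aleph omega0).ord :=
  (hf.1 α hα k hk).trans_le (ord_le_ord.2 (aleph_le_aleph.2 (nat_lt_omega0 k).le))

lemma Stmt9.Aset_ne {A : Set ℕ} (hA : A.Infinite) {f : Ordinal.{u} → ℕ → Ordinal.{u}}
    (hf : IsScale A f) {α β : Ordinal.{u}} (hα : α < (aleph (omega0 + 1)).ord)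
    (hβ : β < (aleph (omega0 + 1)).ord) (hαβ : α < β) :
    Stmt9.Aset A f α ≠ Stmt9.Aset A f β := by
  intro hEq
  obtain ⟨k, hkA, hk⟩ : ∃ k ∈ A, f α k < f β k := by
    have hfin := hf.2.1 α β hαβ hβ
    obtain ⟨k, hk⟩ := (hA.diff hfin).nonempty
    refine ⟨k, hk.1, ?_⟩
    by_contra h
    exact hk.2 ⟨hk.1, h⟩
  have hb : f β k < (aleph omega0).ord := Stmt9.bound hf hβ hkA
  have hmem : Stmt9.code k (f β k) hb ∈ Stmt9.Aset A f β := ⟨k, hkA, hb, rfl⟩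
  rw [← hEq] at hmem
  obtain ⟨k', hk'A, h', e⟩ := hmem
  obtain ⟨ek, ev⟩ := Stmt9.code_inj e
  rw [← ek] at ev
  rw [ev] at hk
  exact lt_irrefl _ hk

/-- Monotone re-enumeration of an injective `c.ord.ToType`-sequence of ordinals. -/
lemma Stmt9.exists_strictMono {c : Cardinal.{u}} {g : c.ord.ToType → Ordinal.{u}}
    (hg : Function.Injective g) :
    ∃ φ : c.ord.ToType → Ordinal.{u}, StrictMono φ ∧ ∀ t, ∃ t', φ t = g t' := by
  classical
  let rr : c.ord.ToType → c.ord.ToType → Prop := fun a b => g a < g b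
  have emb : rr ↪r ((· < ·) : Ordinal.{u} → Ordinal.{u} → Prop) := ⟨⟨g, hg⟩, Iff.rfl⟩
  haveI : IsWellOrder c.ord.ToType rr := emb.isWellOrder
  have hle : c.ord ≤ type rr := by
    rw [Cardinal.ord_le, card_type, mk_toType, card_ord]
  refine ⟨fun t => g (enum rr ⟨((ToType.mk (o := c.ord)).symm t).1,
    (Set.mem_Iio.1 ((ToType.mk (o := c.ord)).symm t).2).trans_le hle⟩), ?_, fun t => ⟨_, rfl⟩⟩
  intro t t' h
  have h0 : (ToType.mk (o := c.ord)).symm t < (ToType.mk (o := c.ord)).symm t' :=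
    (ToType.mk (o := c.ord)).symm.lt_iff_lt.2 h
  have h1 : ((ToType.mk (o := c.ord)).symm t).1 < ((ToType.mk (o := c.ord)).symm t').1 :=
    Subtype.coe_lt_coe.2 h0
  exact (enum_lt_enum (r := rr)).2 (Subtype.mk_lt_mk.2 h1)

/-- If there is a scale on `∏_{k ∈ A} ℵ_k` that is good at every point of cofinality
`ℵ_{n+1}`, then `KH(ℵ_{n+1}, ℵ_ω)` holds: there is a slim `(ℵ_{n+1}, ℵ_ω)`-family of
cardinality `ℵ_{ω+1}` (subsets of `ℵ_ω` being represented as subsets of the canonical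
type `(aleph ω).ord.ToType`). -/
theorem stmt9 (n : ℕ) (A : Set ℕ) (hA : A.Infinite)
    (f : Ordinal.{u} → ℕ → Ordinal.{u}) (hf : IsScale A f)
    (hgood : ∀ α < (aleph (omega0 + 1)).ord,
      α.cof = aleph ((n : Ordinal.{u}) + 1) → IsGoodPoint A f α) :
    ∃ F : Set (Set (aleph omega0).ord.ToType),
      SlimFamily (aleph ((n : Ordinal.{u}) + 1)) F ∧ #F = aleph (omega0 + 1) := by
  classical
  set Ω : Ordinal.{u} := (aleph (omega0 + 1)).ord with hΩdef
  set κ : Cardinal.{u} := aleph ((n : Ordinal.{u}) + 1) with hκdef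
  have hκreg : Cardinal.IsRegular κ := by
    rw [hκdef, Ordinal.add_one_eq_succ]; exact isRegular_aleph_succ _
  have hκcof : κ.ord.cof = κ := hκreg.cof_eq
  have hΩcof : Ω.cof = aleph (omega0 + 1) := by
    rw [hΩdef, Ordinal.add_one_eq_succ]; exact (isRegular_aleph_succ _).cof_eq
  have hκltΩ : κ < aleph (omega0 + 1) := by
    rw [hκdef]
    refine aleph_lt_aleph.2 (lt_of_lt_of_le ?_ le_self_add)
    exact_mod_cast nat_lt_omega0 (n + 1)
  -- the family
  set AsetFn : Ω.ToType → Set (aleph omega0).ord.ToType :=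
    fun t => Stmt9.Aset A f ((ToType.mk (o := Ω)).symm t).1 with hAsetFn
  have hAsetFn_lt : ∀ t, ((ToType.mk (o := Ω)).symm t).1 < Ω := fun t => ((ToType.mk (o := Ω)).symm t).2
  have hAinj : Function.Injective AsetFn := by
    intro t t' h
    by_contra hne
    have hord : ((ToType.mk (o := Ω)).symm t).1 ≠ ((ToType.mk (o := Ω)).symm t').1 := by
      intro h'
      exact hne ((ToType.mk (o := Ω)).symm.injective (Subtype.ext h'))
    rcases hord.lt_or_gt with hlt | hlt
    · exact (Stmt9.Aset_ne hA hf (hAsetFn_lt t) (hAsetFn_lt t') hlt) h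
    · exact (Stmt9.Aset_ne hA hf (hAsetFn_lt t') (hAsetFn_lt t) hlt) h.symm
  refine ⟨Set.range AsetFn, ?_, ?_⟩
  swap
  · rw [mk_range_eq _ hAinj, mk_toType, card_ord]
  intro x hx
  by_contra hcon
  push_neg at hcon
  have hxn : #x ≤ aleph n := by
    have hs : κ = Order.succ (aleph (n : Ordinal.{u})) := by
      rw [hκdef, Ordinal.add_one_eq_succ, aleph_succ]
    rw [hs] at hx
    exact Order.lt_succ_iff.1 hx
  -- an injection of `κ` many restrictions
  set R := (fun A_1 => A_1 ∩ x) '' Set.range AsetFn with hRdef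
  obtain ⟨ι⟩ : Nonempty (κ.ord.ToType ↪ ↥R) := by
    rw [← Cardinal.le_def, mk_toType, card_ord]
    exact hcon
  have hmem : ∀ r : ↥R, ∃ β : Ordinal.{u}, β < Ω ∧ Stmt9.Aset A f β ∩ x = r.1 := by
    rintro ⟨r, hr⟩
    obtain ⟨s, ⟨t, rfl⟩, rfl⟩ := hr
    exact ⟨((ToType.mk (o := Ω)).symm t).1, hAsetFn_lt t, rfl⟩
  choose g0 hg0lt hg0res using hmem
  have hg0inj : Function.Injective g0 := by
    intro r r' h
    have : r.1 = r'.1 := by rw [← hg0res r, ← hg0res r', h]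
    exact Subtype.ext this
  -- a strictly increasing κ-sequence of ordinals with pairwise distinct restrictions
  obtain ⟨φ, hφmono, hφmem⟩ := Stmt9.exists_strictMono (g := fun t => g0 (ι t))
    (hg0inj.comp ι.injective)
  have hφltΩ : ∀ t, φ t < Ω := by
    intro t; obtain ⟨t', ht'⟩ := hφmem t; rw [ht']; exact hg0lt _
  set αstar : Ordinal.{u} := lsub φ with hαstar
  have hφlt : ∀ t, φ t < αstar := lt_lsub φ
  have hαΩ : αstar < Ω := by
    refine lsub_lt_ord ?_ hφltΩ
    rw [mk_toType, card_ord, hΩcof]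
    exact hκltΩ
  have hcof_le : αstar.cof ≤ κ := by
    have := cof_lsub_le φ
    rwa [mk_toType, card_ord] at this
  have hcof_ge : κ ≤ αstar.cof := by
    rw [le_cof_iff_lsub]
    intro ιt f' hl
    have htm : ∀ i : ιt, ∃ t, f' i ≤ φ t := by
      intro i
      refine lt_lsub_iff.1 ?_
      rw [← hαstar, ← hl]
      exact lt_lsub f' i
    choose tmap htmap using htm
    have hub : Set.Unbounded (· < ·) (Set.range tmap) := by
      intro t
      have hφt : φ t < lsub f' := by rw [hl]; exact hφlt t
      obtain ⟨i, hi⟩ := lt_lsub_iff.1 hφt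
      refine ⟨tmap i, ⟨i, rfl⟩, ?_⟩
      intro hlt'
      exact absurd (hi.trans (htmap i)) (not_le.2 (hφmono hlt'))
    haveI : IsWellOrder κ.ord.ToType (· < ·) := isWellOrder_lt
    have h1 := Order.cof_le (s := Set.range tmap) (fun t => (hub t).imp fun b hb => ⟨hb.1, not_lt.1 hb.2⟩)
    rw [cof_toType, hκcof] at h1
    exact h1.trans mk_range_le
  have hcof : αstar.cof = κ := le_antisymm hcof_le hcof_ge
  -- goodness at αstar
  obtain ⟨D, hDC, hDunb, k₀, hk₀⟩ :=
    hgood αstar hαΩ (by rw [hcof, hκdef]) (Set.range φ)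
      (by rintro β ⟨t, rfl⟩; exact hφlt t)
      (by
        intro β hβ
        obtain ⟨t, ht⟩ := lt_lsub_iff.1 (hαstar ▸ hβ)
        exact ⟨φ t, ⟨t, rfl⟩, ht⟩)
  have hDlt : ∀ β ∈ D, β < Ω := by
    intro β hβ
    obtain ⟨t, rfl⟩ := hDC hβ
    exact hφltΩ t
  have hDr : ∀ β ∈ D, ∃ r : ↥R, g0 r = β := by
    intro β hβ
    obtain ⟨t, rfl⟩ := hDC hβ
    obtain ⟨t', ht'⟩ := hφmem t
    exact ⟨ι t', ht'.symm⟩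
  have hDres_inj : ∀ β ∈ D, ∀ η ∈ D,
      Stmt9.Aset A f β ∩ x = Stmt9.Aset A f η ∩ x → β = η := by
    intro β hβ η hη h
    obtain ⟨r, rfl⟩ := hDr β hβ
    obtain ⟨r', rfl⟩ := hDr η hη
    have : r.1 = r'.1 := by rw [← hg0res r, ← hg0res r', h]
    exact congrArg g0 (Subtype.ext this)
  -- the coding map
  set W := (ULift.{u} ℕ × ↥x) ⊕ (Fin k₀ → Option ↥x) with hWdef
  set hfun : Ordinal.{u} → W := fun β =>
    if hP : ∃ k, k ∈ A ∧ k₀ ≤ k ∧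
        ∃ h : f β k < (aleph omega0).ord, Stmt9.code k (f β k) h ∈ x then
      Sum.inl (ULift.up hP.choose,
        ⟨Stmt9.code hP.choose (f β hP.choose) hP.choose_spec.2.2.choose,
          hP.choose_spec.2.2.choose_spec⟩)
    else
      Sum.inr (fun j =>
        if hc : (j : ℕ) ∈ A ∧ ∃ h : f β j < (aleph omega0).ord,
            Stmt9.code j (f β j) h ∈ x then
          some ⟨Stmt9.code j (f β j) hc.2.choose, hc.2.choose_spec⟩
        else none) with hfundef
  -- the non-large-coordinate part determines the restriction
  have hsub : ∀ β' η' : Ordinal.{u},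
      ¬ (∃ k, k ∈ A ∧ k₀ ≤ k ∧
        ∃ h : f β' k < (aleph omega0).ord, Stmt9.code k (f β' k) h ∈ x) →
      ((fun j : Fin k₀ =>
        if hc : (j : ℕ) ∈ A ∧ ∃ h : f β' j < (aleph omega0).ord,
            Stmt9.code j (f β' j) h ∈ x then
          some (⟨Stmt9.code j (f β' j) hc.2.choose, hc.2.choose_spec⟩ : ↥x)
        else none)
      = (fun j : Fin k₀ =>
        if hc : (j : ℕ) ∈ A ∧ ∃ h : f η' j < (aleph omega0).ord,
            Stmt9.code j (f η' j) h ∈ x then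
          some (⟨Stmt9.code j (f η' j) hc.2.choose, hc.2.choose_spec⟩ : ↥x)
        else none)) →
      Stmt9.Aset A f β' ∩ x ⊆ Stmt9.Aset A f η' ∩ x := by
    intro β' η' hP' heq u hu
    obtain ⟨⟨k, hkA, hklt, hcode⟩, hux⟩ := hu
    have hkk₀ : k < k₀ := by
      by_contra hge
      exact hP' ⟨k, hkA, le_of_not_gt hge, hklt, hcode ▸ hux⟩
    have hcj : ((⟨k, hkk₀⟩ : Fin k₀) : ℕ) ∈ A ∧
        ∃ h : f β' (⟨k, hkk₀⟩ : Fin k₀) < (aleph omega0).ord,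
          Stmt9.code (⟨k, hkk₀⟩ : Fin k₀) (f β' (⟨k, hkk₀⟩ : Fin k₀)) h ∈ x :=
      ⟨hkA, hklt, hcode ▸ hux⟩
    have h1 := congrFun heq (⟨k, hkk₀⟩ : Fin k₀)
    rw [dif_pos hcj] at h1
    by_cases hcj' : ((⟨k, hkk₀⟩ : Fin k₀) : ℕ) ∈ A ∧
        ∃ h : f η' (⟨k, hkk₀⟩ : Fin k₀) < (aleph omega0).ord,
          Stmt9.code (⟨k, hkk₀⟩ : Fin k₀) (f η' (⟨k, hkk₀⟩ : Fin k₀)) h ∈ x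
    · rw [dif_pos hcj'] at h1
      have h2 : Stmt9.code k (f β' k) hcj.2.choose
          = Stmt9.code k (f η' k) hcj'.2.choose :=
        congrArg Subtype.val (Option.some.inj h1)
      refine ⟨⟨k, hkA, hcj'.2.choose, ?_⟩, hux⟩
      rw [hcode]
      exact h2
    · rw [dif_neg hcj'] at h1
      exact absurd h1 (Option.some_ne_none _)
  -- `hfun` is injective on `D`
  have hinj : ∀ β ∈ D, ∀ η ∈ D, hfun β = hfun η → β = η := by
    have key : ∀ β ∈ D, ∀ η ∈ D, β < η → hfun β ≠ hfun η := by
      intro β hβ η hη hlt he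
      rw [hfundef] at he
      simp only at he
      by_cases hPβ : ∃ k, k ∈ A ∧ k₀ ≤ k ∧
          ∃ h : f β k < (aleph omega0).ord, Stmt9.code k (f β k) h ∈ x
        <;> by_cases hPη : ∃ k, k ∈ A ∧ k₀ ≤ k ∧
          ∃ h : f η k < (aleph omega0).ord, Stmt9.code k (f η k) h ∈ x
      · rw [dif_pos hPβ, dif_pos hPη, Sum.inl.injEq, Prod.mk.injEq] at he
        obtain ⟨h1, h2⟩ := he
        have h1' : hPβ.choose = hPη.choose := congrArg ULift.down h1
        have h2' := congrArg Subtype.val h2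
        obtain ⟨-, hv⟩ := Stmt9.code_inj h2'
        rw [← h1'] at hv
        have hflt := hk₀ β hβ η hη hlt hPβ.choose hPβ.choose_spec.1 hPβ.choose_spec.2.1
        rw [hv] at hflt
        exact lt_irrefl _ hflt
      · rw [dif_pos hPβ, dif_neg hPη] at he
        exact Sum.inl_ne_inr he
      · rw [dif_neg hPβ, dif_pos hPη] at he
        exact Sum.inr_ne_inl he
      · rw [dif_neg hPβ, dif_neg hPη, Sum.inr.injEq] at he
        have e1 := hsub β η hPβ he
        have e2 := hsub η β hPη he.symm
        exact (ne_of_lt hlt) (hDres_inj β hβ η hη (le_antisymm e1 e2))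
    intro β hβ η hη he
    rcases lt_trichotomy β η with h | h | h
    · exact absurd he (key β hβ η hη h)
    · exact h
    · exact absurd he.symm (key η hη β hβ h)
  -- `W` is small
  have h1 : #(ULift.{u} ℕ × ↥x) ≤ aleph n := by
    simp only [mk_prod, mk_uLift, mk_nat, Cardinal.lift_id, lift_aleph0]
    calc ℵ₀ * #(↥x) ≤ aleph (n : Ordinal.{u}) * aleph n :=
          mul_le_mul' (aleph0_le_aleph _) hxn
      _ = aleph n := Cardinal.mul_eq_self (aleph0_le_aleph _)
  have hOptx : #(Option ↥x) ≤ aleph (n : Ordinal.{u}) := by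
    rw [mk_option]
    exact add_le_of_le (aleph0_le_aleph _) hxn (one_le_aleph0.trans (aleph0_le_aleph _))
  have h2 : #(Fin k₀ → Option ↥x) ≤ aleph (n : Ordinal.{u}) := by
    rw [mk_arrow, Cardinal.lift_uzero, mk_fin, Cardinal.lift_natCast]
    calc #(Option ↥x) ^ (k₀ : Cardinal.{u}) ≤ aleph (n : Ordinal.{u}) ^ (k₀ : Cardinal.{u}) :=
          power_le_power_right hOptx
      _ ≤ aleph n := by
          rw [power_natCast]
          exact power_nat_le (aleph0_le_aleph _)
  have hWle : #W ≤ aleph (n : Ordinal.{u}) := by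
    rw [hWdef, mk_sum, Cardinal.lift_id, Cardinal.lift_id]
    exact add_le_of_le (aleph0_le_aleph _) h1 h2
  have hWlt : #W < κ := by
    refine hWle.trans_lt ?_
    rw [hκdef]
    refine aleph_lt_aleph.2 ?_
    rw [Ordinal.add_one_eq_succ]
    exact Order.lt_succ _
  -- collapse `D` through `W` and bound it, contradicting unboundedness
  set ψ : W → Ordinal.{u} := fun w => if h : ∃ β ∈ D, hfun β = w then h.choose else 0
    with hψdef
  have hψD : ∀ β ∈ D, ψ (hfun β) = β := by
    intro β hβ
    have hex : ∃ β' ∈ D, hfun β' = hfun β := ⟨β, hβ, rfl⟩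
    rw [hψdef]
    simp only [dif_pos hex]
    obtain ⟨hD', he⟩ := hex.choose_spec
    exact hinj _ hD' _ hβ he
  have hψlt : ∀ w, ψ w < αstar := by
    intro w
    rw [hψdef]
    simp only
    by_cases h : ∃ β ∈ D, hfun β = w
    · rw [dif_pos h]
      obtain ⟨t, ht⟩ := hDC h.choose_spec.1
      rw [← ht]
      exact hφlt t
    · rw [dif_neg h]
      have hne : Nonempty κ.ord.ToType := by
        refine Ordinal.nonempty_toType_iff.2 ?_
        intro h0
        have hc := congrArg Ordinal.card h0
        rw [card_ord, card_zero] at hc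
        rw [hc] at hκreg
        exact Cardinal.aleph0_pos.not_ge hκreg.aleph0_le
      obtain ⟨t0⟩ := hne
      exact lt_of_le_of_lt zero_le (hφlt t0)
  have hlim : Order.IsSuccLimit αstar := aleph0_le_cof.1 (by rw [hcof]; exact hκreg.aleph0_le)
  have hsup_lt : iSup ψ < αstar := iSup_lt_ord (by rw [hcof]; exact hWlt) hψlt
  have hsucc : iSup ψ + 1 < αstar := by
    rw [Ordinal.add_one_eq_succ]
    exact hlim.succ_lt hsup_lt
  obtain ⟨γ, hγD, hγge⟩ := hDunb _ hsucc
  have hle' : γ ≤ iSup ψ := by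
    rw [← hψD γ hγD]
    exact Ordinal.le_iSup ψ (hfun γ)
  have hcontra : iSup ψ + 1 ≤ iSup ψ := hγge.trans hle'
  rw [Ordinal.add_one_eq_succ] at hcontra
  exact absurd (Order.succ_le_iff.1 hcontra) (lt_irrefl _)
end

section
/- Let n < ω. If KH(ℵ_{n+1}, ℵ_ω) fails (there is no slim (ℵ_{n+1}, ℵ_ω)-family of cardinality ℵ_{ω+1}), then for every infinite A ⊆ ω and every scale (f_α : α < ℵ_{ω+1}) on ∏_{k∈A} ℵ_k, the set of ordinals α < ℵ_{ω+1} with cf(α) = ℵ_{n+1} that are not good for the scale is stationary in ℵ_{ω+1}: it meets every closed unbounded subset of ℵ_{ω+1}. -/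
open Cardinal Ordinal

universe u

/-- `C` is a closed unbounded subset of `θ`: `C ⊆ θ`, `C` is unbounded in `θ`, and `C`
contains the supremum of each of its bounded nonempty subsets without a maximum. -/
def IsClubBelow (θ : Ordinal.{u}) (C : Set Ordinal.{u}) : Prop :=
  C ⊆ Set.Iio θ ∧ (∀ β < θ, ∃ γ ∈ C, β ≤ γ) ∧
  ∀ S : Set Ordinal.{u}, S ⊆ C → S.Nonempty → sSup S < θ → sSup S ∉ S → sSup S ∈ C

lemma auxCofLeMk {δ : Ordinal.{u}} {S : Set Ordinal.{u}}
    (hsub : S ⊆ Set.Iio δ) (hub : ∀ β < δ, ∃ γ ∈ S, β ≤ γ) :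
    Cardinal.lift.{u+1} δ.cof ≤ #S := by
  have h1 : Ordinal.lsub.{u+1, u+1} (fun s : S => Ordinal.lift.{u+1} s.1)
      = Ordinal.lift.{u+1} δ := by
    apply le_antisymm
    · exact Ordinal.lsub_le fun s => Ordinal.lift_lt.2 (hsub s.2)
    · refine le_of_forall_lt fun b hb => ?_
      obtain ⟨b', hb', rfl⟩ := Ordinal.lt_lift_iff.1 hb
      obtain ⟨γ, hγS, hγ⟩ := hub b' hb'
      exact lt_of_le_of_lt (Ordinal.lift_le.2 hγ) (Ordinal.lt_lsub _ (⟨γ, hγS⟩ : S))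
  calc Cardinal.lift.{u+1} δ.cof = (Ordinal.lift.{u+1} δ).cof := Ordinal.lift_cof δ
    _ ≤ #S := by rw [← h1]; exact Ordinal.cof_lsub_le _

lemma auxCofLeCof {o o' : Ordinal.{u}} {g : Ordinal.{u} → Ordinal.{u}}
    (hmono : ∀ i j, i < o' → j < o' → i < j → g i < g j)
    (hlt : ∀ i, i < o' → g i < o)
    (hub : ∀ β < o, ∃ i, i < o' ∧ β ≤ g i) :
    o'.cof ≤ o.cof := by
  obtain ⟨ι, h, hlsub, hcard⟩ := Ordinal.exists_lsub_cof o
  rw [← hcard]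
  have hne : ∀ i : ι, {b : Ordinal.{u} | b < o' ∧ h i ≤ g b}.Nonempty := by
    intro i
    have hi := Ordinal.lt_lsub h i
    rw [hlsub] at hi
    obtain ⟨b, hb, hbg⟩ := hub _ hi
    exact ⟨b, hb, hbg⟩
  set m : ι → Ordinal.{u} := fun i => sInf {b : Ordinal.{u} | b < o' ∧ h i ≤ g b} with hm
  have hmem : ∀ i, m i < o' ∧ h i ≤ g (m i) := fun i => csInf_mem (hne i)
  have hkey : Ordinal.lsub.{u,u} m = o' := by
    apply le_antisymm
    · exact Ordinal.lsub_le fun i => (hmem i).1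
    · refine le_of_forall_lt fun b hb => ?_
      have hgb : g b < Ordinal.lsub.{u,u} h := by rw [hlsub]; exact hlt b hb
      obtain ⟨i, hi⟩ := Ordinal.lt_lsub_iff.1 hgb
      have hbm : b ≤ m i := by
        apply le_csInf (hne i)
        intro c hc
        by_contra hbc
        push_neg at hbc
        exact absurd (hmono c b hc.1 hb hbc) (not_lt.2 (hi.trans hc.2))
      exact hbm.trans_lt (Ordinal.lt_lsub m i)
  rw [← hkey]
  exact Ordinal.cof_lsub_le m

lemma auxMkFinsetLe (γ : Type u) : #(Finset γ) ≤ max ℵ₀ #γ :=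
  calc #(Finset γ) ≤ #(Multiset γ) :=
        mk_le_of_injective (fun _ _ h => Finset.val_inj.1 h)
    _ ≤ #(List γ) := mk_quotient_le
    _ ≤ max ℵ₀ #γ := mk_list_le_max γ

noncomputable def tIdx (o : Ordinal.{u}) (t : o.ToType) : Ordinal.{u} :=
  @Ordinal.typein o.ToType (· < ·) isWellOrder_lt t

lemma tIdx_lt_self (o : Ordinal.{u}) (t : o.ToType) : tIdx o t < o :=
  Ordinal.typein_lt_self t

lemma tIdx_strictMono {o : Ordinal.{u}} {t₁ t₂ : o.ToType} (h : t₁ < t₂) :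
    tIdx o t₁ < tIdx o t₂ :=
  (@Ordinal.typein_lt_typein o.ToType (· < ·) isWellOrder_lt _ _).2 h

lemma exists_tIdx_eq {o : Ordinal.{u}} {i : Ordinal.{u}} (h : i < o) :
    ∃ t : o.ToType, tIdx o t = i := by
  refine ⟨@Ordinal.enum o.ToType (· < ·) isWellOrder_lt ⟨i, ?_⟩, ?_⟩
  · rw [Ordinal.type_toType]; exact h
  · exact @Ordinal.typein_enum o.ToType (· < ·) isWellOrder_lt i _

/-- If `KH(ℵ_{n+1}, ℵ_ω)` fails, then for every infinite `A ⊆ ω` and every scale on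
`∏_{k ∈ A} ℵ_k`, the set of ordinals `α < ℵ_{ω+1}` of cofinality `ℵ_{n+1}` that are not
good for the scale is stationary in `ℵ_{ω+1}`: it meets every club. -/
theorem stmt10 (n : ℕ)
    (hno : ¬ ∃ F : Set (Set (aleph omega0).ord.ToType),
      SlimFamily (aleph ((n : Ordinal.{u}) + 1)) F ∧ #F = aleph (omega0 + 1)) :
    ∀ A : Set ℕ, A.Infinite → ∀ f : Ordinal.{u} → ℕ → Ordinal.{u}, IsScale A f →
      ∀ C : Set Ordinal.{u}, IsClubBelow ((aleph (omega0 + 1)).ord) C →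
        ∃ α ∈ C, α.cof = aleph ((n : Ordinal.{u}) + 1) ∧ ¬ IsGoodPoint A f α := by
  intro A hA f hsc C hC
  by_contra hcon
  set θ : Ordinal.{u} := (aleph (omega0 + 1)).ord with hθdef
  set κ : Cardinal.{u} := aleph ((n : Ordinal.{u}) + 1) with hκdef
  set μ : Cardinal.{u} := aleph omega0 with hμdef
  set L := μ.ord.ToType with hLdef
  have hcon' : ∀ α ∈ C, α.cof = κ → IsGoodPoint A f α := by
    intro α hα hcof
    by_contra hbad
    exact hcon ⟨α, hα, hcof, hbad⟩
  have hκreg : κ.IsRegular := by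
    rw [hκdef, add_one_eq_succ]; exact isRegular_aleph_succ _
  have hθreg : (aleph (omega0 + 1)).IsRegular := by
    rw [add_one_eq_succ]; exact isRegular_aleph_succ _
  have hθcof : θ.cof = aleph (omega0 + 1) := hθreg.cof_eq
  have hκθ : κ < aleph (omega0 + 1) := by
    rw [hκdef]
    refine aleph_lt_aleph.2 ?_
    rw [add_one_eq_succ, add_one_eq_succ]
    exact Order.succ_lt_succ (nat_lt_omega0 n)
  -- the coding function
  have hmkL : #L = μ := by rw [hLdef, mk_toType, card_ord]
  have hjle : #(ULift.{u} ℕ × L) ≤ #L := by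
    rw [mk_prod, mk_uLift, Cardinal.mk_nat, lift_aleph0]
    simp only [Cardinal.lift_id]
    rw [hmkL]
    exact le_of_eq (Cardinal.mul_eq_right (aleph0_le_aleph _) (aleph0_le_aleph _)
      aleph0_ne_zero)
  obtain ⟨j⟩ : Nonempty (ULift.{u} ℕ × L ↪ L) := (Cardinal.le_def _ _).1 hjle
  have hμpos : (0 : Ordinal.{u}) < μ.ord := (isSuccLimit_ord (aleph0_le_aleph _)).pos
  set elt : Ordinal.{u} → L := fun ξ =>
    if h : ξ < μ.ord then (@Ordinal.ToType.mk μ.ord) ⟨ξ, h⟩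
    else (@Ordinal.ToType.mk μ.ord) ⟨0, hμpos⟩ with heltdef
  have helt : ∀ ξ₁ ξ₂, ξ₁ < μ.ord → ξ₂ < μ.ord → elt ξ₁ = elt ξ₂ → ξ₁ = ξ₂ := by
    intro ξ₁ ξ₂ h1 h2 he
    simp only [heltdef, dif_pos h1, dif_pos h2] at he
    have h3 := (@Ordinal.ToType.mk μ.ord).injective he
    exact congrArg Subtype.val h3
  set code : ℕ → Ordinal.{u} → L := fun k ξ => j ⟨ULift.up k, elt ξ⟩ with hcodedef
  have hcode : ∀ k₁ k₂ ξ₁ ξ₂, ξ₁ < μ.ord → ξ₂ < μ.ord →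
      code k₁ ξ₁ = code k₂ ξ₂ → k₁ = k₂ ∧ ξ₁ = ξ₂ := by
    intro k₁ k₂ ξ₁ ξ₂ h1 h2 he
    have h3 := j.injective he
    rw [Prod.mk.injEq] at h3
    exact ⟨congrArg ULift.down h3.1, helt _ _ h1 h2 h3.2⟩
  set b : Ordinal.{u} → Set L := fun α => (fun k => code k (f α k)) '' A with hbdef
  have hfA : ∀ α < θ, ∀ k ∈ A, f α k < μ.ord := by
    intro α hα k hk
    exact lt_of_lt_of_le (hsc.1 α hα k hk)
      (ord_le_ord.2 (aleph_le_aleph.2 (nat_lt_omega0 k).le))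
  have hbinj : ∀ α β, α < θ → β < θ → α < β → b α ≠ b β := by
    intro α β hα hβ hlt hbe
    obtain ⟨k, hkA, hkf⟩ : ∃ k ∈ A, f α k < f β k := by
      have hfin := hsc.2.1 α β hlt hβ
      obtain ⟨k, hk⟩ := (hA.diff hfin).nonempty
      refine ⟨k, hk.1, ?_⟩
      by_contra hnk
      exact hk.2 ⟨hk.1, hnk⟩
    have hmem : code k (f α k) ∈ b β := by
      rw [← hbe]; exact ⟨k, hkA, rfl⟩
    obtain ⟨k', hk'A, hk'⟩ := hmem
    obtain ⟨hkk, hff⟩ := hcode k' k _ _ (hfA β hβ k' hk'A) (hfA α hα k hkA) hk'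
    subst hkk
    rw [hff] at hkf
    exact lt_irrefl _ hkf
  have hbne : ∀ α β, α < θ → β < θ → α ≠ β → b α ≠ b β := by
    intro α β hα hβ hne
    rcases hne.lt_or_gt with h | h
    · exact hbinj α β hα hβ h
    · exact fun he => hbinj β α hβ hα h he.symm
  set F : Set (Set L) := b '' C with hFdef
  -- cardinality of F
  have hex1 : ∀ s : F, ∃ α, α ∈ C ∧ b α = s.1 := by
    intro s
    obtain ⟨α, hα, he⟩ := s.2
    exact ⟨α, hα, he⟩
  choose ψ hψC hψb using hex1
  have hCF1 : #C ≤ Cardinal.lift.{u+1} #F := by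
    rw [← mk_uLift]
    refine mk_le_of_injective
      (f := fun c : C => ULift.up (⟨b c.1, Set.mem_image_of_mem _ c.2⟩ : F)) ?_
    intro c₁ c₂ he
    have h2 : b c₁.1 = b c₂.1 := congrArg (Subtype.val ∘ ULift.down) he
    apply Subtype.ext
    by_contra hne
    exact hbne _ _ (hC.1 c₁.2) (hC.1 c₂.2) hne h2
  have hCF2 : Cardinal.lift.{u+1} #F ≤ #C := by
    rw [← mk_uLift]
    refine mk_le_of_injective (f := fun s : ULift.{u+1} F => (⟨ψ s.down, hψC _⟩ : C)) ?_
    intro s₁ s₂ he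
    have h2 : ψ s₁.down = ψ s₂.down := congrArg Subtype.val he
    have h3 : s₁.down.1 = s₂.down.1 := by rw [← hψb s₁.down, ← hψb s₂.down, h2]
    cases s₁; cases s₂
    exact congrArg ULift.up (Subtype.ext h3)
  have hθcardcof : θ.cof = θ.card := by rw [hθcof, hθdef, card_ord]
  have hCle : #C ≤ Cardinal.lift.{u+1} θ.card := by
    calc #C ≤ #(Set.Iio θ) := mk_le_mk_of_subset hC.1
      _ = Cardinal.lift.{u+1} θ.card := Cardinal.mk_Iio_ordinal θ
  have hCge : Cardinal.lift.{u+1} θ.card ≤ #C := by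
    have h2 := auxCofLeMk hC.1 hC.2.1
    rwa [hθcardcof] at h2
  have hFcard : #F = aleph (omega0 + 1) := by
    have h2 : Cardinal.lift.{u+1} #F = Cardinal.lift.{u+1} θ.card :=
      le_antisymm (hCF2.trans hCle) (hCge.trans hCF1)
    have h3 : #F = θ.card := Cardinal.lift_inj.1 h2
    rw [h3, hθdef, card_ord]
  have hslim : SlimFamily κ F := by
    intro x hx
    by_contra hxR
    set R : Set (Set L) := (fun s => s ∩ x) '' F with hRdef
    have hκR : κ ≤ #R := le_of_not_gt hxR
    have hxle : #x ≤ aleph (n : Ordinal.{u}) := by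
      rw [hκdef, add_one_eq_succ, aleph_succ] at hx
      exact Order.lt_succ_iff.1 hx
    have hmkι : #(κ.ord.ToType) = κ := by rw [mk_toType, card_ord]
    obtain ⟨w⟩ : Nonempty (κ.ord.ToType ↪ R) := by
      rw [← Cardinal.le_def, hmkι]; exact hκR
    have hex2 : ∀ t : κ.ord.ToType, ∃ α, α ∈ C ∧ b α ∩ x = ((w t : Set L)) := by
      intro t
      obtain ⟨s, hsF, hsx⟩ := (w t).2
      obtain ⟨α, hαC, hαs⟩ := hsF
      exact ⟨α, hαC, by rw [hαs]; exact hsx⟩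
    choose φ hφC hφx using hex2
    have hφinj : Function.Injective φ := by
      intro t₁ t₂ he
      apply w.injective
      apply Subtype.ext
      rw [← hφx t₁, ← hφx t₂, he]
    have hφθ : ∀ t, φ t < θ := fun t => hC.1 (hφC t)
    have hdist : ∀ t₁ t₂, b (φ t₁) ∩ x = b (φ t₂) ∩ x → t₁ = t₂ := by
      intro t₁ t₂ he
      apply w.injective
      apply Subtype.ext
      rw [← hφx t₁, ← hφx t₂, he]
    set rel : κ.ord.ToType → κ.ord.ToType → Prop := fun a c => φ a < φ c with hreldef
    haveI hwo : IsWellOrder κ.ord.ToType rel := RelEmbedding.isWellOrder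
      (⟨⟨φ, hφinj⟩, Iff.rfl⟩ : rel ↪r ((· < ·) : Ordinal.{u} → Ordinal.{u} → Prop))
    have hτ : κ.ord ≤ Ordinal.type rel := by
      rw [Cardinal.ord_le, Ordinal.card_type, hmkι]
    set g : Ordinal.{u} → Ordinal.{u} := fun i =>
      if h : i < κ.ord then φ (Ordinal.enum rel ⟨i, h.trans_le hτ⟩) else 0 with hgdef
    have hgmono : ∀ i j, i < κ.ord → j < κ.ord → i < j → g i < g j := by
      intro i j hi hj hij
      simp only [hgdef, dif_pos hi, dif_pos hj]
      exact (Ordinal.enum_lt_enum (r := rel)).2 (Subtype.mk_lt_mk.2 hij)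
    have hgφ : ∀ i, i < κ.ord → ∃ t, φ t = g i := by
      intro i hi
      simp only [hgdef, dif_pos hi]
      exact ⟨_, rfl⟩
    have hgC : ∀ i, i < κ.ord → g i ∈ C := by
      intro i hi
      simp only [hgdef, dif_pos hi]
      exact hφC _
    set q : κ.ord.ToType → Ordinal.{u} :=
      fun t => g (tIdx κ.ord t) with hqdef
    have htyp : ∀ t : κ.ord.ToType, tIdx κ.ord t < κ.ord :=
      fun t => tIdx_lt_self _ t
    have hqmono : ∀ t₁ t₂ : κ.ord.ToType, t₁ < t₂ → q t₁ < q t₂ := by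
      intro t₁ t₂ h
      exact hgmono _ _ (htyp t₁) (htyp t₂) (tIdx_strictMono h)
    haveI : NoMaxOrder κ.ord.ToType := Cardinal.noMaxOrder hκreg.aleph0_le
    haveI : Nonempty κ.ord.ToType := toType_nonempty_iff_ne_zero.2
      (ne_of_gt (isSuccLimit_ord hκreg.aleph0_le).pos)
    set δ : Ordinal.{u} := ⨆ t, q t with hδdef
    have hqδ : ∀ t, q t < δ := by
      intro t
      obtain ⟨t', ht'⟩ := exists_gt t
      exact (hqmono _ _ ht').trans_le (Ordinal.le_iSup q t')
    have hδθ : δ < θ := by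
      refine Ordinal.iSup_lt_ord ?_ fun t => ?_
      · rw [hmkι, hθcof]; exact hκθ
      · exact hC.1 (hgC _ (htyp t))
    set S : Set Ordinal.{u} := Set.range q with hSdef
    have hSC : S ⊆ C := by rintro _ ⟨t, rfl⟩; exact hgC _ (htyp t)
    have hSδ : S ⊆ Set.Iio δ := by rintro _ ⟨t, rfl⟩; exact hqδ t
    have hSub : ∀ β < δ, ∃ γ ∈ S, β ≤ γ := by
      intro β hβ
      obtain ⟨t, ht⟩ := Ordinal.lt_iSup_iff.1 hβ
      exact ⟨q t, ⟨t, rfl⟩, ht.le⟩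
    have hsSup : sSup S = δ := rfl
    have hδC : δ ∈ C := by
      have hnem : S.Nonempty := Set.range_nonempty q
      have hnotin : sSup S ∉ S := by
        rw [hsSup]
        rintro ⟨t, ht⟩
        exact absurd ht (ne_of_lt (hqδ t))
      have h2 := hC.2.2 S hSC hnem (by rw [hsSup]; exact hδθ) hnotin
      rwa [hsSup] at h2
    have hcofδ : δ.cof = κ := by
      apply le_antisymm
      · have h2 := Ordinal.cof_iSup_le hqδ
        rwa [hmkι] at h2
      · have h2 := auxCofLeCof (o := δ) (o' := κ.ord) (g := g) hgmono ?_ ?_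
        · rwa [hκreg.cof_eq] at h2
        · intro i hi
          obtain ⟨t, ht⟩ := exists_tIdx_eq hi
          have h3 : q t = g i := by rw [hqdef]; simp only [ht]
          rw [← h3]
          exact hqδ _
        · intro β hβ
          obtain ⟨γ, ⟨t, rfl⟩, hle⟩ := hSub β hβ
          exact ⟨tIdx κ.ord t, htyp t, hle⟩
    have hgp := hcon' δ hδC hcofδ
    obtain ⟨D, hDS, hDub, k₀, hk₀⟩ := hgp S hSδ hSub
    have hDδ : ∀ α ∈ D, α < δ := fun α hα => hSδ (hDS hα)
    have hDθ : ∀ α ∈ D, α < θ := fun α hα => (hDδ α hα).trans hδθ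
    have hDφ : ∀ α ∈ D, ∃ t, φ t = α := by
      intro α hα
      obtain ⟨t, rfl⟩ := hDS hα
      exact hgφ _ (htyp t)
    have hDdist : ∀ α₁ ∈ D, ∀ α₂ ∈ D, α₁ ≠ α₂ → b α₁ ∩ x ≠ b α₂ ∩ x := by
      intro α₁ h1 α₂ h2 hne he
      obtain ⟨t₁, rfl⟩ := hDφ α₁ h1
      obtain ⟨t₂, rfl⟩ := hDφ α₂ h2
      exact hne (congrArg φ (hdist t₁ t₂ he))
    have hDge : Cardinal.lift.{u+1} κ ≤ #D := by
      have h2 := auxCofLeMk (fun α hα => hDδ α hα) hDub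
      rwa [hcofδ] at h2
    -- counting
    set Bad : Set Ordinal.{u} :=
      {α | α ∈ D ∧ ∃ k, k ∈ A ∧ k₀ ≤ k ∧ code k (f α k) ∈ x} with hBaddef
    set Rest : Set Ordinal.{u} :=
      {α | α ∈ D ∧ ¬ ∃ k, k ∈ A ∧ k₀ ≤ k ∧ code k (f α k) ∈ x} with hRestdef
    have hDsub : D ⊆ Bad ∪ Rest := by
      intro α hα
      by_cases h : ∃ k, k ∈ A ∧ k₀ ≤ k ∧ code k (f α k) ∈ x
      · exact Or.inl ⟨hα, h⟩
      · exact Or.inr ⟨hα, h⟩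
    have haleph0n : (ℵ₀ : Cardinal.{u+1}) ≤ Cardinal.lift.{u+1} (aleph (n : Ordinal.{u})) := by
      rw [← lift_aleph0.{u+1, u}]
      exact Cardinal.lift_le.2 (aleph0_le_aleph _)
    have hBadle : #Bad ≤ Cardinal.lift.{u+1} (aleph (n : Ordinal.{u})) := by
      have hBadU : Bad = ⋃ (k : ULift.{u+1} ℕ),
          {α | α ∈ D ∧ k.down ∈ A ∧ k₀ ≤ k.down ∧ code k.down (f α k.down) ∈ x} := by
        ext α
        simp only [hBaddef, Set.mem_iUnion, Set.mem_setOf_eq]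
        constructor
        · rintro ⟨hα, k, hk⟩; exact ⟨⟨k⟩, hα, hk⟩
        · rintro ⟨k, hα, hk⟩; exact ⟨hα, k.down, hk⟩
      have hE : ∀ k : ULift.{u+1} ℕ,
          #{α | α ∈ D ∧ k.down ∈ A ∧ k₀ ≤ k.down ∧ code k.down (f α k.down) ∈ x}
            ≤ Cardinal.lift.{u+1} #x := by
        intro k
        rw [← mk_uLift]
        refine mk_le_of_injective
          (f := fun a => ULift.up (⟨code k.down (f a.1 k.down), a.2.2.2.2⟩ : x)) ?_
        intro a₁ a₂ he
        have hcc : code k.down (f a₁.1 k.down) = code k.down (f a₂.1 k.down) :=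
          congrArg (Subtype.val ∘ ULift.down) he
        obtain ⟨-, hff⟩ := hcode _ _ _ _ (hfA _ (hDθ _ a₁.2.1) _ a₁.2.2.1)
          (hfA _ (hDθ _ a₂.2.1) _ a₂.2.2.1) hcc
        apply Subtype.ext
        rcases lt_trichotomy a₁.1 a₂.1 with h | h | h
        · exact absurd hff (ne_of_lt (hk₀ _ a₁.2.1 _ a₂.2.1 h _ a₁.2.2.1 a₁.2.2.2.1))
        · exact h
        · exact absurd hff.symm (ne_of_lt (hk₀ _ a₂.2.1 _ a₁.2.1 h _ a₁.2.2.1 a₂.2.2.2.1))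
      calc #Bad ≤ #(ULift.{u+1} ℕ) * ⨆ k : ULift.{u+1} ℕ,
            #{α | α ∈ D ∧ k.down ∈ A ∧ k₀ ≤ k.down ∧ code k.down (f α k.down) ∈ x} := by
              rw [hBadU]; exact mk_iUnion_le _
        _ ≤ ℵ₀ * Cardinal.lift.{u+1} #x := by
              refine mul_le_mul' ?_ (ciSup_le' hE)
              rw [mk_uLift, Cardinal.mk_nat, lift_aleph0]
        _ ≤ Cardinal.lift.{u+1} (aleph (n : Ordinal.{u}))
              * Cardinal.lift.{u+1} (aleph (n : Ordinal.{u})) :=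
              mul_le_mul' haleph0n (Cardinal.lift_le.2 hxle)
        _ = Cardinal.lift.{u+1} (aleph (n : Ordinal.{u})) := Cardinal.mul_eq_self haleph0n
    have hq : ∀ α, α ∈ Rest → {p : x | p.1 ∈ b α}.Finite := by
      intro α hα
      have hsub2 : {p : x | p.1 ∈ b α}
          ⊆ ⋃ k ∈ Set.Iio k₀, {p : x | p.1 = code k (f α k)} := by
        rintro p hp
        obtain ⟨k, hkA, hk⟩ := hp
        simp only [Set.mem_iUnion, Set.mem_setOf_eq, Set.mem_Iio]
        refine ⟨k, ?_, hk.symm⟩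
        by_contra hkk
        push_neg at hkk
        refine hα.2 ⟨k, hkA, hkk, ?_⟩
        have hk' : code k (f α k) = (p : L) := hk
        rw [hk']
        exact p.2
      refine Set.Finite.subset (Set.Finite.biUnion (Set.finite_Iio k₀) fun k _ => ?_) hsub2
      exact Set.Subsingleton.finite fun p₁ h₁ p₂ h₂ => Subtype.ext (h₁.trans h₂.symm)
    have hRestle : #Rest ≤ Cardinal.lift.{u+1} (aleph (n : Ordinal.{u})) := by
      have h1 : #Rest ≤ Cardinal.lift.{u+1} #(Finset x) := by
        rw [← mk_uLift]
        refine mk_le_of_injective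
          (f := fun a : Rest => ULift.up ((hq a.1 a.2).toFinset)) ?_
        intro a₁ a₂ he
        have hqe : {p : x | p.1 ∈ b a₁.1} = {p : x | p.1 ∈ b a₂.1} := by
          have h2 := congrArg ULift.down he
          simp only at h2
          rwa [Set.Finite.toFinset_inj] at h2
        have hbx : b a₁.1 ∩ x = b a₂.1 ∩ x := by
          ext y
          constructor
          · rintro ⟨hy1, hy2⟩
            have h3 : (⟨y, hy2⟩ : x) ∈ {p : x | p.1 ∈ b a₁.1} := hy1
            rw [hqe] at h3
            exact ⟨h3, hy2⟩
          · rintro ⟨hy1, hy2⟩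
            have h3 : (⟨y, hy2⟩ : x) ∈ {p : x | p.1 ∈ b a₂.1} := hy1
            rw [← hqe] at h3
            exact ⟨h3, hy2⟩
        apply Subtype.ext
        by_contra hne
        exact hDdist _ a₁.2.1 _ a₂.2.1 hne hbx
      refine h1.trans ?_
      refine (Cardinal.lift_le.2 (auxMkFinsetLe x)).trans ?_
      exact Cardinal.lift_le.2 (max_le (aleph0_le_aleph _) hxle)
    have hfinal : Cardinal.lift.{u+1} κ ≤ Cardinal.lift.{u+1} (aleph (n : Ordinal.{u})) := by
      refine hDge.trans ?_
      calc #D ≤ #(Bad ∪ Rest : Set Ordinal.{u}) := mk_le_mk_of_subset hDsub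
        _ ≤ #Bad + #Rest := mk_union_le _ _
        _ ≤ Cardinal.lift.{u+1} (aleph (n : Ordinal.{u}))
            + Cardinal.lift.{u+1} (aleph (n : Ordinal.{u})) := add_le_add hBadle hRestle
        _ = Cardinal.lift.{u+1} (aleph (n : Ordinal.{u})) := Cardinal.add_eq_self haleph0n
    have hlt2 : aleph (n : Ordinal.{u}) < κ := by
      rw [hκdef]
      refine aleph_lt_aleph.2 ?_
      rw [add_one_eq_succ]
      exact Order.lt_succ _
    exact absurd (Cardinal.lift_le.1 hfinal) (not_le.2 hlt2)
  exact hcon (absurd ⟨F, hslim, hFcard⟩ hno) |>.elim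
end

section
/- Two conditions (X₁,F₁,g₁) and (X₂,F₂,g₂) of ℚ(κ⁺,λ,μ) are compatible (have a common lower bound) if and only if {s↾(X₁∩X₂) : s ∈ F₁} = {s↾(X₁∩X₂) : s ∈ F₂} and g₁(γ)↾(X₁∩X₂) = g₂(γ)↾(X₁∩X₂) for every γ ∈ dom(g₁) ∩ dom(g₂). -/
open Cardinal

universe u

/-- Restriction of a two-valued function along an inclusion of subsets. -/
def restr {L : Type u} {X Y : Set L} (h : Y ⊆ X) (s : ↥X → Bool) : ↥Y → Bool :=
  fun a => s ⟨a.1, h a.2⟩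

/-- `𝒫'_{κ⁺}(λ)`: the collection of `X ⊆ λ` with `|X| ≤ κ` that are closed under the
(fixed) map `J : 𝒫_{κ⁺}(λ) → λ`, i.e. `J Y ∈ X → Y ⊆ X` whenever `|Y| ≤ κ`. -/
def Pdash (κ : Cardinal.{u}) {L : Type u} (J : Set L → L) : Set (Set L) :=
  {X | #X ≤ κ ∧ ∀ Y : Set L, #Y ≤ κ → J Y ∈ X → Y ⊆ X}

/-- Raw conditions of the forcing `ℚ(κ⁺,λ,μ)`: triples `(X, F, g)` with `X ⊆ λ`,
`F` a set of functions `X → 2`, and `g` a partial function from `μ` to functions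
`X → 2` (represented `Option`-valued). -/
structure QCond (L Mu : Type u) where
  X : Set L
  F : Set (↥X → Bool)
  g : Mu → Option (↥X → Bool)

/-- `(X, F, g)` is a condition of `ℚ(κ⁺,λ,μ)`: (a) `X ∈ 𝒫'_{κ⁺}(λ)`; (b) `|F| ≤ κ`;
(c) `g` is a partial function into `F` with domain of size `≤ κ`; (d) (relevant only when
`κ > ω`) `F` is `κ`-closed: whenever `X` is the union of a strictly increasing sequence
`(X_i : i < τ)` in `𝒫'_{κ⁺}(λ)` (`τ < κ` regular) with `J (X_i) ∈ X_j` for `i < j < τ`,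
and `f : X → 2` satisfies `f ↾ X_i ∈ F ↾ X_i` for all `i < τ`, then `f ∈ F`. -/
def IsQCond (κ : Cardinal.{u}) {L Mu : Type u} (J : Set L → L) (p : QCond L Mu) : Prop :=
  p.X ∈ Pdash κ J ∧
  #p.F ≤ κ ∧
  (∀ γ s, p.g γ = some s → s ∈ p.F) ∧
  #{γ | p.g γ ≠ none} ≤ κ ∧
  (ℵ₀ < κ → ∀ τ : Cardinal.{u}, τ.IsRegular → τ < κ →
    ∀ Xs : Ordinal.{u} → Set L,
      (∀ i < τ.ord, Xs i ∈ Pdash κ J) →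
      (∀ i j : Ordinal.{u}, i < j → j < τ.ord → Xs i ⊆ Xs j ∧ Xs i ≠ Xs j) →
      (∀ i : Ordinal.{u}, i + 1 < τ.ord → J (Xs i) ∈ Xs (i + 1)) →
      (⋃ i ∈ Set.Iio τ.ord, Xs i) = p.X →
      ∀ f : ↥p.X → Bool,
        (∀ i < τ.ord, ∀ h : Xs i ⊆ p.X, restr h f ∈ restr h '' p.F) →
        f ∈ p.F)

/-- The order of `ℚ(κ⁺,λ,μ)`: `p ≤ q` iff (e) `p.X = q.X` or `J q.X ∈ p.X` (whence
`q.X ⊆ p.X`); (f) `{s ↾ q.X : s ∈ p.F} = q.F`; and (g) `dom g_p ⊇ dom g_q` with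
`g_p(γ)` extending `g_q(γ)` as a function for every `γ ∈ dom g_q`. -/
def QLE {L Mu : Type u} (J : Set L → L) (p q : QCond L Mu) : Prop :=
  (p.X = q.X ∨ J q.X ∈ p.X) ∧
  ∃ h : q.X ⊆ p.X,
    restr h '' p.F = q.F ∧
    ∀ γ s, q.g γ = some s → ∃ t, p.g γ = some t ∧ restr h t = s

/-! ### Auxiliary gluing machinery -/

open Classical in
noncomputable def glueFun {L : Type u} {P Q : Set L} (X : Set L)
    (s : ↥P → Bool) (t : ↥Q → Bool) : ↥X → Bool :=
  fun x => if h : x.1 ∈ P then s ⟨x.1, h⟩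
    else if h' : x.1 ∈ Q then t ⟨x.1, h'⟩ else false

theorem glueFun_p {L : Type u} {P Q : Set L} (X : Set L)
    (s : ↥P → Bool) (t : ↥Q → Bool) (x : ↥X) (h : x.1 ∈ P) :
    glueFun X s t x = s ⟨x.1, h⟩ := by
  simp only [glueFun, dif_pos h]

theorem glueFun_q {L : Type u} {P Q : Set L} (X : Set L)
    (s : ↥P → Bool) (t : ↥Q → Bool) (x : ↥X) (h : x.1 ∉ P) (h' : x.1 ∈ Q) :
    glueFun X s t x = t ⟨x.1, h'⟩ := by
  simp only [glueFun, dif_neg h, dif_pos h']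

theorem glueFun_none {L : Type u} {P Q : Set L} (X : Set L)
    (s : ↥P → Bool) (t : ↥Q → Bool) (x : ↥X) (h : x.1 ∉ P) (h' : x.1 ∉ Q) :
    glueFun X s t x = false := by
  simp only [glueFun, dif_neg h, dif_neg h']

theorem glueFun_restr_p {L : Type u} {P Q X : Set L} (hP : P ⊆ X)
    (s : ↥P → Bool) (t : ↥Q → Bool) :
    restr hP (glueFun X s t) = s := by
  funext x
  show glueFun X s t ⟨x.1, hP x.2⟩ = s x
  rw [glueFun_p X s t _ x.2]

theorem glueFun_restr_q {L : Type u} {P Q X : Set L} (hQ : Q ⊆ X)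
    (s : ↥P → Bool) (t : ↥Q → Bool)
    (hm : restr (X := P) (Y := P ∩ Q) Set.inter_subset_left s =
      restr (X := Q) (Y := P ∩ Q) Set.inter_subset_right t) :
    restr hQ (glueFun X s t) = t := by
  funext x
  show glueFun X s t ⟨x.1, hQ x.2⟩ = t x
  by_cases h : x.1 ∈ P
  · rw [glueFun_p X s t _ h]
    exact congrFun hm ⟨x.1, h, x.2⟩
  · rw [glueFun_q X s t _ h x.2]

/-- iterated `J`-preimage closure sequence -/
def closSeq {L : Type u} (W : L → Set L) (A : Set L) : ℕ → Set L
  | 0 => A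
  | n + 1 => closSeq W A n ∪ ⋃ x : closSeq W A n, W x.1

/-- every set of size `≤ κ` is contained in a member of `𝒫'`. -/
theorem exists_Pdash_closure {L : Type u} {κ : Cardinal.{u}} (hκ0 : ℵ₀ ≤ κ)
    (J : Set L → L) (hJ : Set.BijOn J {X : Set L | #X ≤ κ} Set.univ)
    (A : Set L) (hA : #A ≤ κ) :
    ∃ X : Set L, X ∈ Pdash κ J ∧ A ⊆ X := by
  classical
  have hex : ∀ x : L, ∃ Y : Set L, #Y ≤ κ ∧ J Y = x := by
    intro x
    obtain ⟨Y, hY, hJY⟩ := hJ.2.2 (Set.mem_univ x)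
    exact ⟨Y, hY, hJY⟩
  choose W hW1 hW2 using hex
  have hSκ : ∀ n, #(closSeq W A n) ≤ κ := by
    intro n
    induction n with
    | zero => exact hA
    | succ n ih =>
      rw [closSeq]
      refine (Cardinal.mk_union_le _ _).trans ?_
      have h2 : #(⋃ x : closSeq W A n, W x.1) ≤ #(closSeq W A n) * ⨆ x : closSeq W A n, #(W x.1) :=
        Cardinal.mk_iUnion_le _
      have h3 : (⨆ x : closSeq W A n, #(W x.1)) ≤ κ := ciSup_le' fun x => hW1 _
      have h4 : #(⋃ x : closSeq W A n, W x.1) ≤ κ :=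
        h2.trans <| (mul_le_mul' ih h3).trans (Cardinal.mul_eq_self hκ0).le
      calc #(closSeq W A n) + #(⋃ x : closSeq W A n, W x.1) ≤ κ + κ := add_le_add ih h4
        _ = κ := Cardinal.add_eq_self hκ0
  refine ⟨⋃ n : ULift.{u} ℕ, closSeq W A n.down, ⟨?_, ?_⟩, ?_⟩
  · refine (Cardinal.mk_iUnion_le fun n : ULift.{u} ℕ => closSeq W A n.down).trans ?_
    have h1 : #(ULift.{u} ℕ) ≤ κ := by
      rw [Cardinal.mk_uLift, Cardinal.mk_nat, Cardinal.lift_aleph0]; exact hκ0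
    have h2 : (⨆ n : ULift.{u} ℕ, #(closSeq W A n.down)) ≤ κ :=
      ciSup_le' fun n => hSκ n.down
    exact (mul_le_mul' h1 h2).trans (Cardinal.mul_eq_self hκ0).le
  · intro Y hY hJY
    obtain ⟨n, hn⟩ := Set.mem_iUnion.1 hJY
    have hYW : Y = W (J Y) := hJ.2.1 hY (hW1 _) (hW2 (J Y)).symm
    intro a ha
    refine Set.mem_iUnion.2 ⟨⟨n.down + 1⟩, ?_⟩
    rw [closSeq]
    right
    refine Set.mem_iUnion.2 ⟨⟨J Y, hn⟩, ?_⟩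
    rw [hYW] at ha; exact ha
  · intro a ha
    exact Set.mem_iUnion.2 ⟨⟨0⟩, ha⟩

/-- Compatibility criterion in `ℚ(κ⁺,λ,μ)`: two conditions `p, q` are compatible iff
`{s ↾ (X₁ ∩ X₂) : s ∈ F₁} = {s ↾ (X₁ ∩ X₂) : s ∈ F₂}` and
`g₁(γ) ↾ (X₁ ∩ X₂) = g₂(γ) ↾ (X₁ ∩ X₂)` for every `γ ∈ dom g₁ ∩ dom g₂`. Here `λ` and
`μ` are represented by the canonical types `lam.ord.toType` and `μ.ord.toType`, and `J`
is a bijection from `𝒫_{κ⁺}(λ)` onto `λ`. -/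
theorem stmt15 (κ lam μ : Cardinal.{u}) (hκ : κ.IsRegular) (hlam : lam.IsRegular)
    (hkl : κ < lam) (hpow : κ ^< κ = κ) (h2κ : (2 : Cardinal.{u}) ^ κ = Order.succ κ)
    (hlκ : lam ^ κ = lam)
    (J : Set lam.ord.ToType → lam.ord.ToType)
    (hJ : Set.BijOn J {X : Set lam.ord.ToType | #X ≤ κ} Set.univ)
    (p q : QCond lam.ord.ToType μ.ord.ToType)
    (hp : IsQCond κ J p) (hq : IsQCond κ J q) :
    (∃ r : QCond lam.ord.ToType μ.ord.ToType, IsQCond κ J r ∧ QLE J r p ∧ QLE J r q) ↔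
    (restr (X := p.X) (Y := p.X ∩ q.X) Set.inter_subset_left '' p.F =
        restr (X := q.X) (Y := p.X ∩ q.X) Set.inter_subset_right '' q.F ∧
      ∀ γ s t, p.g γ = some s → q.g γ = some t →
        restr (X := p.X) (Y := p.X ∩ q.X) Set.inter_subset_left s =
          restr (X := q.X) (Y := p.X ∩ q.X) Set.inter_subset_right t) := by
  classical
  constructor
  · rintro ⟨r, _, ⟨_, hpr, hFp, hgp⟩, ⟨_, hqr, hFq, hgq⟩⟩
    constructor
    · rw [← hFp, ← hFq, ← Set.image_comp, ← Set.image_comp]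
      rfl
    · intro γ s t hs ht
      obtain ⟨u, hu, hres⟩ := hgp γ s hs
      obtain ⟨u', hu', hres'⟩ := hgq γ t ht
      rw [hu] at hu'
      injection hu' with h
      subst h
      rw [← hres, ← hres']
      rfl
  · rintro ⟨hF, hg⟩
    have hκ0 : ℵ₀ ≤ κ := hκ.aleph0_le
    -- the ambient closed set XX
    have hpqfin : #({J p.X, J q.X} : Set lam.ord.ToType) ≤ κ :=
      le_trans (le_of_lt (((Set.finite_singleton _).insert _).lt_aleph0)) hκ0
    have hA : #(p.X ∪ q.X ∪ {J p.X, J q.X} : Set lam.ord.ToType) ≤ κ := by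
      refine (Cardinal.mk_union_le _ _).trans ?_
      refine le_trans (add_le_add ((Cardinal.mk_union_le _ _).trans
        (add_le_add hp.1.1 hq.1.1)) hpqfin) ?_
      rw [Cardinal.add_eq_self hκ0, Cardinal.add_eq_self hκ0]
    obtain ⟨XX, hXXP, hAXX⟩ := exists_Pdash_closure hκ0 J hJ _ hA
    have hpXX : p.X ⊆ XX := fun a ha => hAXX (Or.inl (Or.inl ha))
    have hqXX : q.X ⊆ XX := fun a ha => hAXX (Or.inl (Or.inr ha))
    have hJpXX : J p.X ∈ XX := hAXX (Or.inr (Set.mem_insert _ _))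
    have hJqXX : J q.X ∈ XX := hAXX (Or.inr (Set.mem_insert_of_mem _ rfl))
    -- matching partners
    have hpickT : ∀ s ∈ p.F, ∃ t, t ∈ q.F ∧
        restr (X := p.X) (Y := p.X ∩ q.X) Set.inter_subset_left s =
          restr (X := q.X) (Y := p.X ∩ q.X) Set.inter_subset_right t := by
      intro s hs
      have h1 : restr (X := p.X) (Y := p.X ∩ q.X) Set.inter_subset_left s ∈
          restr (X := q.X) (Y := p.X ∩ q.X) Set.inter_subset_right '' q.F := by
        rw [← hF]; exact ⟨s, hs, rfl⟩
      obtain ⟨t, ht, hts⟩ := h1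
      exact ⟨t, ht, hts.symm⟩
    have hpickS : ∀ t ∈ q.F, ∃ s, s ∈ p.F ∧
        restr (X := p.X) (Y := p.X ∩ q.X) Set.inter_subset_left s =
          restr (X := q.X) (Y := p.X ∩ q.X) Set.inter_subset_right t := by
      intro t ht
      have h1 : restr (X := q.X) (Y := p.X ∩ q.X) Set.inter_subset_right t ∈
          restr (X := p.X) (Y := p.X ∩ q.X) Set.inter_subset_left '' p.F := by
        rw [hF]; exact ⟨t, ht, rfl⟩
      obtain ⟨s, hs, hst⟩ := h1
      exact ⟨s, hs, hst⟩
    have hpickT' : ∀ s : ↥p.X → Bool, ∃ t, s ∈ p.F → t ∈ q.F ∧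
        restr (X := p.X) (Y := p.X ∩ q.X) Set.inter_subset_left s =
          restr (X := q.X) (Y := p.X ∩ q.X) Set.inter_subset_right t := by
      intro s
      by_cases hs : s ∈ p.F
      · obtain ⟨t, h1, h2⟩ := hpickT s hs; exact ⟨t, fun _ => ⟨h1, h2⟩⟩
      · exact ⟨fun _ => false, fun h => absurd h hs⟩
    choose pickT hpT using hpickT'
    have hpickS' : ∀ t : ↥q.X → Bool, ∃ s, t ∈ q.F → s ∈ p.F ∧
        restr (X := p.X) (Y := p.X ∩ q.X) Set.inter_subset_left s =
          restr (X := q.X) (Y := p.X ∩ q.X) Set.inter_subset_right t := by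
      intro t
      by_cases ht : t ∈ q.F
      · obtain ⟨s, h1, h2⟩ := hpickS t ht; exact ⟨s, fun _ => ⟨h1, h2⟩⟩
      · exact ⟨fun _ => false, fun h => absurd h ht⟩
    choose pickS hpS using hpickS'
    -- the amalgamated condition
    refine ⟨⟨XX,
      {f | ∃ s ∈ p.F, ∃ t ∈ q.F,
        restr (X := p.X) (Y := p.X ∩ q.X) Set.inter_subset_left s =
          restr (X := q.X) (Y := p.X ∩ q.X) Set.inter_subset_right t ∧ f = glueFun XX s t},
      fun γ => (p.g γ).elim
        ((q.g γ).elim none (fun t => some (glueFun XX (pickS t) t)))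
        (fun s => some (glueFun XX s ((q.g γ).elim (pickT s) id)))⟩,
      ⟨hXXP, ?_, ?_, ?_, ?_⟩, ⟨Or.inr hJpXX, hpXX, ?_, ?_⟩, ⟨Or.inr hJqXX, hqXX, ?_, ?_⟩⟩
    · -- cardinality of FF
      dsimp only
      have hsub : {f : ↥XX → Bool | ∃ s ∈ p.F, ∃ t ∈ q.F,
          restr (X := p.X) (Y := p.X ∩ q.X) Set.inter_subset_left s =
            restr (X := q.X) (Y := p.X ∩ q.X) Set.inter_subset_right t ∧ f = glueFun XX s t} ⊆
          (fun st : ((↥p.X → Bool) × (↥q.X → Bool)) => glueFun XX st.1 st.2) '' (p.F ×ˢ q.F) := by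
        rintro f ⟨s, hs, t, ht, _, rfl⟩
        exact ⟨(s, t), ⟨hs, ht⟩, rfl⟩
      refine le_trans (Cardinal.mk_le_mk_of_subset hsub) ?_
      refine le_trans Cardinal.mk_image_le ?_
      have hprod : #(p.F ×ˢ q.F : Set _) = #p.F * #q.F := by
        rw [Cardinal.mk_congr (Equiv.Set.prod _ _), Cardinal.mk_prod,
          Cardinal.lift_id, Cardinal.lift_id]
      rw [hprod]
      exact (mul_le_mul' hp.2.1 hq.2.1).trans (Cardinal.mul_eq_self hκ0).le
    · -- g' values in FF
      intro γ u hu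
      dsimp only at hu
      cases hp1 : p.g γ with
      | none =>
        rw [hp1] at hu
        cases hq1 : q.g γ with
        | none => rw [hq1] at hu; exact absurd hu (by simp)
        | some t =>
          rw [hq1] at hu
          simp only [Option.elim_none, Option.elim_some] at hu
          injection hu with hu'
          have htF := hq.2.2.1 γ t hq1
          obtain ⟨hsF, hm⟩ := hpS t htF
          exact ⟨pickS t, hsF, t, htF, hm, hu'.symm⟩
      | some s =>
        rw [hp1] at hu
        cases hq1 : q.g γ with
        | none =>
          rw [hq1] at hu
          simp only [Option.elim_none, Option.elim_some] at hu
          injection hu with hu'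
          have hsF := hp.2.2.1 γ s hp1
          obtain ⟨htF, hm⟩ := hpT s hsF
          exact ⟨s, hsF, pickT s, htF, hm, hu'.symm⟩
        | some t =>
          rw [hq1] at hu
          simp only [Option.elim_some, id] at hu
          injection hu with hu'
          exact ⟨s, hp.2.2.1 γ s hp1, t, hq.2.2.1 γ t hq1, hg γ s t hp1 hq1, hu'.symm⟩
    · -- domain of g'
      dsimp only
      have hsub : {γ | (p.g γ).elim
            ((q.g γ).elim none (fun t => some (glueFun XX (pickS t) t)))
            (fun s => some (glueFun XX s ((q.g γ).elim (pickT s) id))) ≠ none} ⊆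
          {γ | p.g γ ≠ none} ∪ {γ | q.g γ ≠ none} := by
        intro γ hγ
        by_contra hc
        simp only [Set.mem_union, Set.mem_setOf_eq, not_or, not_not] at hc
        apply hγ
        show (p.g γ).elim _ _ = none
        rw [hc.1, hc.2]
        rfl
      refine le_trans (Cardinal.mk_le_mk_of_subset hsub) ?_
      refine le_trans (Cardinal.mk_union_le _ _) ?_
      refine le_trans (add_le_add hp.2.2.2.1 hq.2.2.2.1) ?_
      rw [Cardinal.add_eq_self hκ0]
    · -- closure
      intro _ τ hτreg hτκ Xs hXsP hXschain hXslink hXsU f hf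
      dsimp only at *
      have hmemU : ∀ a ∈ XX, ∃ i, i < τ.ord ∧ a ∈ Xs i := by
        intro a ha
        rw [← hXsU] at ha
        obtain ⟨i, hi, hai⟩ := Set.mem_iUnion₂.1 ha
        exact ⟨i, hi, hai⟩
      have hXssub : ∀ i, i < τ.ord → Xs i ⊆ XX := by
        intro i hi
        rw [← hXsU]
        exact Set.subset_biUnion_of_mem hi
      have hagree : ∀ i, i < τ.ord → ∃ s ∈ p.F, ∃ t ∈ q.F,
          (restr (X := p.X) (Y := p.X ∩ q.X) Set.inter_subset_left s =
            restr (X := q.X) (Y := p.X ∩ q.X) Set.inter_subset_right t) ∧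
          ∀ x : ↥XX, x.1 ∈ Xs i → f x = glueFun XX s t x := by
        intro i hi
        obtain ⟨f₀, hf₀, heq⟩ := hf i hi (hXssub i hi)
        obtain ⟨s, hs, t, ht, hm, rfl⟩ := hf₀
        refine ⟨s, hs, t, ht, hm, ?_⟩
        intro x hx
        exact (congrFun heq ⟨x.1, hx⟩).symm
      obtain ⟨i₀, hi₀, hJpi⟩ := hmemU (J p.X) hJpXX
      have hpXs : p.X ⊆ Xs i₀ := (hXsP i₀ hi₀).2 p.X hp.1.1 hJpi
      obtain ⟨i₁, hi₁, hJqi⟩ := hmemU (J q.X) hJqXX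
      have hqXs : q.X ⊆ Xs i₁ := (hXsP i₁ hi₁).2 q.X hq.1.1 hJqi
      obtain ⟨s₀, hs₀, t₀, ht₀, hm₀, hag₀⟩ := hagree i₀ hi₀
      obtain ⟨s₁, hs₁, t₁, ht₁, hm₁, hag₁⟩ := hagree i₁ hi₁
      have hfp : ∀ (x : ↥XX) (h : x.1 ∈ p.X), f x = s₀ ⟨x.1, h⟩ := by
        intro x hx
        rw [hag₀ x (hpXs hx), glueFun_p XX s₀ t₀ x hx]
      have hfq : ∀ (x : ↥XX) (h : x.1 ∈ q.X), f x = t₁ ⟨x.1, h⟩ := by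
        intro x hx
        by_cases hxp : x.1 ∈ p.X
        · rw [hag₁ x (hqXs hx), glueFun_p XX s₁ t₁ x hxp]
          exact congrFun hm₁ ⟨x.1, hxp, hx⟩
        · rw [hag₁ x (hqXs hx), glueFun_q XX s₁ t₁ x hxp hx]
      have hf0 : ∀ x : ↥XX, x.1 ∉ p.X → x.1 ∉ q.X → f x = false := by
        intro x hxp hxq
        obtain ⟨j, hj, hxj⟩ := hmemU x.1 x.2
        obtain ⟨sj, _, tj, _, _, hagj⟩ := hagree j hj
        rw [hagj x hxj, glueFun_none XX sj tj x hxp hxq]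
      have hm : restr (X := p.X) (Y := p.X ∩ q.X) Set.inter_subset_left s₀ =
          restr (X := q.X) (Y := p.X ∩ q.X) Set.inter_subset_right t₁ := by
        funext a
        have h1 := hfp ⟨a.1, hpXX a.2.1⟩ a.2.1
        have h2 := hfq ⟨a.1, hpXX a.2.1⟩ a.2.2
        exact h1.symm.trans h2
      refine ⟨s₀, hs₀, t₁, ht₁, hm, ?_⟩
      funext x
      by_cases hxp : x.1 ∈ p.X
      · rw [hfp x hxp, glueFun_p XX s₀ t₁ x hxp]
      · by_cases hxq : x.1 ∈ q.X
        · rw [hfq x hxq, glueFun_q XX s₀ t₁ x hxp hxq]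
        · rw [hf0 x hxp hxq, glueFun_none XX s₀ t₁ x hxp hxq]
    · -- restr to p.X of FF = p.F
      dsimp only
      apply Set.Subset.antisymm
      · rintro _ ⟨f, ⟨s, hs, t, ht, hm, rfl⟩, rfl⟩
        rw [glueFun_restr_p hpXX s t]
        exact hs
      · intro s hs
        obtain ⟨t, ht, hm⟩ := hpickT s hs
        exact ⟨glueFun XX s t, ⟨s, hs, t, ht, hm, rfl⟩, glueFun_restr_p hpXX s t⟩
    · -- g extends p.g
      intro γ s hs
      cases hq1 : q.g γ with
      | none =>
        refine ⟨glueFun XX s (pickT s), ?_, glueFun_restr_p hpXX s (pickT s)⟩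
        show (p.g γ).elim _ _ = _
        rw [hs, hq1]
        simp only [Option.elim_none, Option.elim_some]
      | some t =>
        refine ⟨glueFun XX s t, ?_, glueFun_restr_p hpXX s t⟩
        show (p.g γ).elim _ _ = _
        rw [hs, hq1]
        simp only [Option.elim_some, id]
    · -- restr to q.X of FF = q.F
      dsimp only
      apply Set.Subset.antisymm
      · rintro _ ⟨f, ⟨s, hs, t, ht, hm, rfl⟩, rfl⟩
        rw [glueFun_restr_q hqXX s t hm]
        exact ht
      · intro t ht
        obtain ⟨s, hs, hm⟩ := hpickS t ht
        exact ⟨glueFun XX s t, ⟨s, hs, t, ht, hm, rfl⟩, glueFun_restr_q hqXX s t hm⟩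
    · -- g extends q.g
      intro γ t ht
      cases hp1 : p.g γ with
      | none =>
        have htF := hq.2.2.1 γ t ht
        obtain ⟨hsF, hm⟩ := hpS t htF
        refine ⟨glueFun XX (pickS t) t, ?_, glueFun_restr_q hqXX (pickS t) t hm⟩
        show (p.g γ).elim _ _ = _
        rw [hp1, ht]
        simp only [Option.elim_none, Option.elim_some]
      | some s =>
        refine ⟨glueFun XX s t, ?_, glueFun_restr_q hqXX s t (hg γ s t hp1 ht)⟩
        show (p.g γ).elim _ _ = _
        rw [hp1, ht]
        simp only [Option.elim_some, id]
end

section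
/- Let η < μ and let ℚ(κ⁺,λ,η) be defined using the same bijection J as ℚ(κ⁺,λ,μ). The map π : ℚ(κ⁺,λ,μ) → ℚ(κ⁺,λ,η) given by π(X,F,g) = (X,F,g↾η) is a projection: it is order-preserving, and for every condition q = (X₁,F₁,g₁) ∈ ℚ(κ⁺,λ,μ) and every condition p = (X₂,F₂,g₂) ∈ ℚ(κ⁺,λ,η) with p ≤ π(q), there exists q' ∈ ℚ(κ⁺,λ,μ) with q' ≤ q and π(q') = p. -/
open Cardinal

universe u

/-- Raw conditions of the forcings `ℚ(κ⁺,λ,ν)`: triples `(X, F, g)` with `X ⊆ λ`, `F` a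
set of functions `X → 2`, and `g` a partial (`Option`-valued) function on ordinals with
values among functions `X → 2`; the third coordinate of `ℚ(κ⁺,λ,ν)` is a partial
function defined on ordinals `< ν`. -/
structure QCondO (L : Type u) where
  X : Set L
  F : Set (↥X → Bool)
  g : Ordinal.{u} → Option (↥X → Bool)

/-- `(X, F, g)` is a condition of `ℚ(κ⁺,λ,ν)`: (a) `X ∈ 𝒫'_{κ⁺}(λ)`; (b) `|F| ≤ κ`;
(c) `g` is a partial function from `ν` into `F` with domain of size `≤ κ`; (d) (relevant
only when `κ > ω`) `F` is `κ`-closed: whenever `X` is the union of a strictly increasing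
sequence `(X_i : i < τ)` in `𝒫'_{κ⁺}(λ)` (`τ < κ` regular) with `J (X_i) ∈ X_j` for
`i < j < τ`, and `f : X → 2` satisfies `f ↾ X_i ∈ F ↾ X_i` for all `i < τ`, then
`f ∈ F`. -/
def IsQCondO (κ ν : Cardinal.{u}) {L : Type u} (J : Set L → L) (p : QCondO L) : Prop :=
  p.X ∈ Pdash κ J ∧
  #p.F ≤ κ ∧
  (∀ γ s, p.g γ = some s → γ < ν.ord ∧ s ∈ p.F) ∧
  #{γ | p.g γ ≠ none} ≤ Cardinal.lift.{u + 1} κ ∧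
  (ℵ₀ < κ → ∀ τ : Cardinal.{u}, τ.IsRegular → τ < κ →
    ∀ Xs : Ordinal.{u} → Set L,
      (∀ i < τ.ord, Xs i ∈ Pdash κ J) →
      (∀ i j : Ordinal.{u}, i < j → j < τ.ord → Xs i ⊆ Xs j ∧ Xs i ≠ Xs j) →
      (∀ i : Ordinal.{u}, i + 1 < τ.ord → J (Xs i) ∈ Xs (i + 1)) →
      (⋃ i ∈ Set.Iio τ.ord, Xs i) = p.X →
      ∀ f : ↥p.X → Bool,
        (∀ i < τ.ord, ∀ h : Xs i ⊆ p.X, restr h f ∈ restr h '' p.F) →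
        f ∈ p.F)

/-- The common order of the forcings `ℚ(κ⁺,λ,ν)`: `p ≤ q` iff (e) `p.X = q.X` or
`J q.X ∈ p.X` (whence `q.X ⊆ p.X`); (f) `{s ↾ q.X : s ∈ p.F} = q.F`; and (g)
`dom g_p ⊇ dom g_q` with `g_p(γ)` extending `g_q(γ)` for every `γ ∈ dom g_q`. -/
def QLEO {L : Type u} (J : Set L → L) (p q : QCondO L) : Prop :=
  (p.X = q.X ∨ J q.X ∈ p.X) ∧
  ∃ h : q.X ⊆ p.X,
    restr h '' p.F = q.F ∧
    ∀ γ s, q.g γ = some s → ∃ t, p.g γ = some t ∧ restr h t = s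

/-- The projection `π : ℚ(κ⁺,λ,μ) → ℚ(κ⁺,λ,η)`, `(X, F, g) ↦ (X, F, g ↾ η)`. -/
noncomputable def projQ (η : Cardinal.{u}) {L : Type u} (p : QCondO L) : QCondO L :=
  ⟨p.X, p.F, fun γ => if γ < η.ord then p.g γ else none⟩

/-- For `η < μ`, the map `π(X,F,g) = (X,F,g↾η)` is a projection from `ℚ(κ⁺,λ,μ)` onto
`ℚ(κ⁺,λ,η)` (both defined using the same bijection `J`): it maps conditions to
conditions, preserves the order, and whenever `p ∈ ℚ(κ⁺,λ,η)` satisfies `p ≤ π(q)`,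
there is `q' ∈ ℚ(κ⁺,λ,μ)` with `q' ≤ q` and `π(q') = p`. Here `λ` is represented by the
canonical type `lam.ord.ToType` and `J` is a bijection from `𝒫_{κ⁺}(λ)` onto `λ`. -/
theorem stmt16 (κ lam μ η : Cardinal.{u}) (hκ : κ.IsRegular) (hlam : lam.IsRegular)
    (hkl : κ < lam) (hpow : κ ^< κ = κ) (h2κ : (2 : Cardinal.{u}) ^ κ = Order.succ κ)
    (hlκ : lam ^ κ = lam) (hη : η < μ)
    (J : Set lam.ord.ToType → lam.ord.ToType)
    (hJ : Set.BijOn J {X : Set lam.ord.ToType | #X ≤ κ} Set.univ) :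
    (∀ p : QCondO lam.ord.ToType, IsQCondO κ μ J p → IsQCondO κ η J (projQ η p)) ∧
    (∀ p q : QCondO lam.ord.ToType, IsQCondO κ μ J p → IsQCondO κ μ J q →
      QLEO J p q → QLEO J (projQ η p) (projQ η q)) ∧
    (∀ q : QCondO lam.ord.ToType, IsQCondO κ μ J q →
      ∀ p : QCondO lam.ord.ToType, IsQCondO κ η J p → QLEO J p (projQ η q) →
        ∃ q' : QCondO lam.ord.ToType,
          IsQCondO κ μ J q' ∧ QLEO J q' q ∧ projQ η q' = p) := by
  have hηs : η.ord ≤ μ.ord := (Cardinal.ord_lt_ord.mpr hη).le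
  refine ⟨?_, ?_, ?_⟩
  · -- π maps conditions to conditions
    rintro p ⟨h1, h2, h3, h4, h5⟩
    refine ⟨h1, h2, ?_, ?_, h5⟩
    · intro γ s hs
      simp only [projQ] at hs
      split_ifs at hs with hγ
      exact ⟨hγ, (h3 γ s hs).2⟩
    · refine le_trans (Cardinal.mk_le_mk_of_subset ?_) h4
      intro γ hγ
      simp only [projQ, Set.mem_setOf_eq] at hγ ⊢
      split_ifs at hγ with h
      · exact hγ
      · exact absurd rfl hγ
  · -- order preserving
    rintro p q _ _ ⟨hX, h, hF, hg⟩
    refine ⟨hX, h, hF, ?_⟩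
    intro γ s hs
    simp only [projQ] at hs ⊢
    split_ifs at hs with hγ
    obtain ⟨t, ht, hrt⟩ := hg γ s hs
    exact ⟨t, by rw [if_pos hγ, ht], hrt⟩
  · -- projection property
    rintro q hq p hp ⟨hX, h, hF, hg⟩
    obtain ⟨q1, q2, q3, q4, q5⟩ := hq
    obtain ⟨p1, p2, p3, p4, p5⟩ := hp
    classical
    -- extension of elements of q.F to elements of p.F
    have hF' : restr h '' p.F = q.F := hF
    have hext : ∀ s ∈ q.F, ∃ t ∈ p.F, restr h t = s := by
      intro s hs
      rw [← hF'] at hs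
      obtain ⟨t, ht, hrt⟩ := hs
      exact ⟨t, ht, hrt⟩
    set g' : Ordinal.{u} → Option (↥p.X → Bool) := fun γ =>
      if γ < η.ord then p.g γ else
        match q.g γ with
        | none => none
        | some s =>
          if hs : s ∈ q.F then some (hext s hs).choose else none
      with hg'
    refine ⟨⟨p.X, p.F, g'⟩, ⟨p1, p2, ?_, ?_, p5⟩, ⟨hX, h, hF, ?_⟩, ?_⟩
    · -- clause (c) for q'
      intro γ s hs
      simp only [hg'] at hs
      split_ifs at hs with hγ
      · exact ⟨lt_of_lt_of_le ((p3 γ s hs).1) hηs, (p3 γ s hs).2⟩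
      · rcases hqg : q.g γ with _ | s0
        · rw [hqg] at hs; exact absurd hs (by simp)
        · rw [hqg] at hs
          simp only at hs
          split_ifs at hs with hs0
          · have := (hext s0 hs0).choose_spec
            have hsval : s = (hext s0 hs0).choose := (Option.some.inj hs).symm
            exact ⟨(q3 γ s0 hqg).1, hsval ▸ this.1⟩
    · -- clause on domain size
      have hsub : {γ | g' γ ≠ none} ⊆ {γ | p.g γ ≠ none} ∪ {γ | q.g γ ≠ none} := by
        intro γ hγ
        simp only [Set.mem_setOf_eq, hg'] at hγ
        split_ifs at hγ with h1
        · exact Or.inl hγ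
        · right
          rcases hqg : q.g γ with _ | s0
          · rw [hqg] at hγ; exact absurd rfl hγ
          · simp [hqg]
      refine le_trans (Cardinal.mk_le_mk_of_subset hsub) ?_
      refine le_trans (Cardinal.mk_union_le _ _) ?_
      have hq4' : #{γ | q.g γ ≠ none} ≤ Cardinal.lift.{u+1} κ := by
        refine le_trans (Cardinal.mk_le_mk_of_subset ?_) q4
        exact fun γ hγ => hγ
      calc #{γ | p.g γ ≠ none} + #{γ | q.g γ ≠ none}
          ≤ Cardinal.lift.{u+1} κ + Cardinal.lift.{u+1} κ := add_le_add p4 hq4'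
        _ = Cardinal.lift.{u+1} κ := Cardinal.add_eq_self (by
            rw [Cardinal.aleph0_le_lift]; exact hκ.aleph0_le)
    · -- QLEO q' q, clause (g)
      intro γ s hs
      by_cases hγ : γ < η.ord
      · obtain ⟨t, ht, hrt⟩ := hg γ s (by simp [projQ, hγ, hs])
        exact ⟨t, by simp [hg', hγ, ht], hrt⟩
      · have hsF : s ∈ q.F := (q3 γ s hs).2
        refine ⟨(hext s hsF).choose, ?_, (hext s hsF).choose_spec.2⟩
        simp [hg', hγ, hs, hsF]
    · -- projQ η q' = p
      have : (fun γ => if γ < η.ord then g' γ else none) = p.g := by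
        funext γ
        by_cases hγ : γ < η.ord
        · simp [hg', hγ]
        · rw [if_neg hγ]
          rcases hpg : p.g γ with _ | s
          · rfl
          · exact absurd (p3 γ s hpg).1 hγ
      simp only [projQ]
      exact congrArg _ this
end

section
/- Suppose τ and τ' are infinite regular cardinals, (X_i : i < τ) and (Y_j : j < τ') are strictly increasing sequences in 𝒫'_{κ⁺}(λ) with J(X_i) ∈ X_{i+1} for all i < τ and J(Y_j) ∈ Y_{j+1} for all j < τ', and ∪_{i<τ} X_i = ∪_{j<τ'} Y_j. Then the sequences are interleaved — every X_i is contained in some Y_j and every Y_j is contained in some X_i — and τ = τ'. -/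
open Cardinal

universe u

/-- Interleaving lemma: if `J (X_i) ∈ X_{i+1}` and the union of the `X`s is contained
in the union of the `Y`s, and the `Y`s are `J`-closed, then every `X_i` is contained
in some `Y_j`. -/
theorem aux_interleave {κ : Cardinal.{u}} {L : Type u} {J : Set L → L}
    (τ τ' : Cardinal.{u}) (hτ : τ.IsRegular)
    (Xs Ys : Ordinal.{u} → Set L)
    (hXmem : ∀ i < τ.ord, Xs i ∈ Pdash κ J)
    (hYmem : ∀ j < τ'.ord, Ys j ∈ Pdash κ J)
    (hXJ : ∀ i : Ordinal.{u}, i + 1 < τ.ord → J (Xs i) ∈ Xs (i + 1))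
    (hsub : (⋃ i ∈ Set.Iio τ.ord, Xs i) ⊆ ⋃ j ∈ Set.Iio τ'.ord, Ys j) :
    ∀ i < τ.ord, ∃ j < τ'.ord, Xs i ⊆ Ys j := by
  intro i hi
  have hlim : Order.IsSuccLimit (τ.ord) := Cardinal.isSuccLimit_ord hτ.aleph0_le
  have hi1 : i + 1 < τ.ord := hlim.succ_lt hi
  have hJx : J (Xs i) ∈ ⋃ i' ∈ Set.Iio τ.ord, Xs i' := by
    exact Set.mem_biUnion hi1 (hXJ i hi1)
  have := hsub hJx
  rw [Set.mem_iUnion₂] at this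
  obtain ⟨j, hj, hmem⟩ := this
  exact ⟨j, hj, (hYmem j hj).2 (Xs i) (hXmem i hi).1 hmem⟩

/-- Boundedness lemma: if every `Y_j` is contained in some `X_i`, the `X`s are strictly
increasing, the union of the `X`s is contained in the union of the `Y`s, and `τ' < τ`,
then contradiction. -/
theorem aux_bound {L : Type u}
    (τ τ' : Cardinal.{u}) (hτ : τ.IsRegular)
    (Xs Ys : Ordinal.{u} → Set L)
    (hXinc : ∀ i j : Ordinal.{u}, i < j → j < τ.ord → Xs i ⊆ Xs j ∧ Xs i ≠ Xs j)
    (hsub : ∀ j < τ'.ord, ∃ i < τ.ord, Ys j ⊆ Xs i)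
    (hU : (⋃ i ∈ Set.Iio τ.ord, Xs i) ⊆ ⋃ j ∈ Set.Iio τ'.ord, Ys j)
    (hlt : τ' < τ) : False := by
  have hlim : Order.IsSuccLimit (τ.ord) := Cardinal.isSuccLimit_ord hτ.aleph0_le
  choose f hf hfsub using hsub
  have hcard : (τ'.ord).card < (τ.ord).cof := by
    rw [Cardinal.card_ord, hτ.cof_eq]; exact hlt
  have hbsup : Ordinal.bsup τ'.ord f < τ.ord :=
    Ordinal.bsup_lt_ord hcard hf
  set i₀ := Ordinal.bsup τ'.ord f with hi₀
  have hmono : ∀ a b : Ordinal.{u}, a ≤ b → b < τ.ord → Xs a ⊆ Xs b := by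
    intro a b hab hb
    rcases lt_or_eq_of_le hab with h | h
    · exact (hXinc a b h hb).1
    · rw [h]
  have hall : ∀ j (hj : j < τ'.ord), Ys j ⊆ Xs i₀ := by
    intro j hj
    exact (hfsub j hj).trans (hmono _ _ (Ordinal.le_bsup f j hj) hbsup)
  have hi₁ : i₀ + 1 < τ.ord := hlim.succ_lt hbsup
  have h1 : Xs (i₀ + 1) ⊆ Xs i₀ := by
    intro x hx
    have : x ∈ ⋃ j ∈ Set.Iio τ'.ord, Ys j := hU (Set.mem_biUnion hi₁ hx)
    rw [Set.mem_iUnion₂] at this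
    obtain ⟨j, hj, hmem⟩ := this
    exact hall j hj hmem
  have h2 := hXinc i₀ (i₀ + 1) (lt_add_one i₀) hi₁
  exact h2.2 (Set.Subset.antisymm h2.1 h1)

/-- If `τ, τ'` are infinite regular cardinals and `(X_i : i < τ)`, `(Y_j : j < τ')` are
strictly increasing sequences in `𝒫'_{κ⁺}(λ)` with `J (X_i) ∈ X_{i+1}`,
`J (Y_j) ∈ Y_{j+1}`, and with the same union, then the sequences are interleaved (every
`X_i` is contained in some `Y_j` and vice versa) and `τ = τ'`. Here `λ` is represented
by the canonical type `lam.ord.toType` and `J` is a bijection from `𝒫_{κ⁺}(λ)` onto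
`λ`. -/
theorem stmt18 (κ lam : Cardinal.{u}) (hκ : κ.IsRegular) (hlam : lam.IsRegular)
    (hkl : κ < lam) (hpow : κ ^< κ = κ) (h2κ : (2 : Cardinal.{u}) ^ κ = Order.succ κ)
    (hlκ : lam ^ κ = lam)
    (J : Set lam.ord.ToType → lam.ord.ToType)
    (hJ : Set.BijOn J {X : Set lam.ord.ToType | #X ≤ κ} Set.univ)
    (τ τ' : Cardinal.{u}) (hτ : τ.IsRegular) (hτ' : τ'.IsRegular)
    (Xs Ys : Ordinal.{u} → Set lam.ord.ToType)
    (hXmem : ∀ i < τ.ord, Xs i ∈ Pdash κ J)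
    (hYmem : ∀ j < τ'.ord, Ys j ∈ Pdash κ J)
    (hXinc : ∀ i j : Ordinal.{u}, i < j → j < τ.ord → Xs i ⊆ Xs j ∧ Xs i ≠ Xs j)
    (hYinc : ∀ i j : Ordinal.{u}, i < j → j < τ'.ord → Ys i ⊆ Ys j ∧ Ys i ≠ Ys j)
    (hXJ : ∀ i : Ordinal.{u}, i + 1 < τ.ord → J (Xs i) ∈ Xs (i + 1))
    (hYJ : ∀ j : Ordinal.{u}, j + 1 < τ'.ord → J (Ys j) ∈ Ys (j + 1))
    (hunion : (⋃ i ∈ Set.Iio τ.ord, Xs i) = ⋃ j ∈ Set.Iio τ'.ord, Ys j) :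
    (∀ i < τ.ord, ∃ j < τ'.ord, Xs i ⊆ Ys j) ∧
    (∀ j < τ'.ord, ∃ i < τ.ord, Ys j ⊆ Xs i) ∧
    τ = τ' := by
  have h1 : ∀ i < τ.ord, ∃ j < τ'.ord, Xs i ⊆ Ys j :=
    aux_interleave τ τ' hτ Xs Ys hXmem hYmem hXJ hunion.le
  have h2 : ∀ j < τ'.ord, ∃ i < τ.ord, Ys j ⊆ Xs i :=
    aux_interleave τ' τ hτ' Ys Xs hYmem hXmem hYJ hunion.ge
  refine ⟨h1, h2, ?_⟩
  by_contra hne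
  rcases lt_or_gt_of_ne hne with h | h
  · exact aux_bound τ' τ hτ' Ys Xs hYinc h1 hunion.ge h
  · exact aux_bound τ τ' hτ Xs Ys hXinc h2 hunion.le h
end

section
/- For every condition (X,F,g) of ℚ(κ⁺,λ,μ) and every ordinal β < λ, there exists a condition (X',F',g') of ℚ(κ⁺,λ,μ) with (X',F',g') ≤ (X,F,g) and β ∈ X'. -/
open Cardinal

universe u

/-- Every condition of `ℚ(κ⁺,λ,μ)` can be extended to one whose first coordinate
contains any prescribed `β < λ`. Here `λ` and `μ` are represented by the canonical types
`lam.ord.ToType` and `μ.ord.ToType`, and `J` is a bijection from `𝒫_{κ⁺}(λ)` onto `λ`. -/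
theorem stmt19 (κ lam μ : Cardinal.{u}) (hκ : κ.IsRegular) (hlam : lam.IsRegular)
    (hkl : κ < lam) (hpow : κ ^< κ = κ) (h2κ : (2 : Cardinal.{u}) ^ κ = Order.succ κ)
    (hlκ : lam ^ κ = lam)
    (J : Set lam.ord.ToType → lam.ord.ToType)
    (hJ : Set.BijOn J {X : Set lam.ord.ToType | #X ≤ κ} Set.univ)
    (p : QCond lam.ord.ToType μ.ord.ToType) (hp : IsQCond κ J p)
    (β : lam.ord.ToType) :
    ∃ q : QCond lam.ord.ToType μ.ord.ToType,
      IsQCond κ J q ∧ QLE J q p ∧ β ∈ q.X := by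
  classical
  obtain ⟨⟨hXκ, hXcl⟩, hFκ, hgF, hdom, _⟩ := hp
  have hκinf : ℵ₀ ≤ κ := hκ.aleph0_le
  -- choose preimages under J
  have hsurj : ∀ α : lam.ord.ToType, ∃ Y : Set lam.ord.ToType, #Y ≤ κ ∧ J Y = α := by
    intro α
    obtain ⟨Y, hY1, hY2⟩ := hJ.surjOn (Set.mem_univ α)
    exact ⟨Y, hY1, hY2⟩
  choose Yf hYfκ hYfJ using hsurj
  have hYuniq : ∀ Y : Set lam.ord.ToType, #Y ≤ κ → Yf (J Y) = Y := by
    intro Y hY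
    exact hJ.injOn (hYfκ (J Y)) hY (hYfJ (J Y))
  -- the closure chain
  let A : ℕ → Set lam.ord.ToType :=
    fun n => Nat.rec (p.X ∪ {β, J p.X}) (fun _ S => S ∪ ⋃ α ∈ S, Yf α) n
  have hA0 : A 0 = p.X ∪ {β, J p.X} := rfl
  have hAsucc : ∀ n, A (n + 1) = A n ∪ ⋃ α ∈ A n, Yf α := fun n => rfl
  clear_value A
  have hAκ : ∀ n, #(↥(A n)) ≤ κ := by
    intro n
    induction n with
    | zero =>
        have h2 : #({β, J p.X} : Set lam.ord.ToType) ≤ 2 := by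
          refine le_trans mk_insert_le ?_
          simp [Cardinal.mk_singleton]
          norm_num
        rw [hA0]
        calc #(↥(p.X ∪ {β, J p.X})) ≤ #p.X + #({β, J p.X} : Set lam.ord.ToType) :=
              mk_union_le _ _
          _ ≤ κ + κ := add_le_add hXκ (h2.trans ((nat_lt_aleph0 2).le.trans hκinf))
          _ = κ := add_eq_self hκinf
    | succ n ih =>
        have hb : #(⋃ α ∈ A n, Yf α) ≤ κ := by
          refine le_trans (mk_biUnion_le Yf (A n)) ?_
          have hs : (⨆ x : A n, #(Yf x.1)) ≤ κ := by
            rcases Set.eq_empty_or_nonempty (A n) with h | h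
            · haveI : IsEmpty (↥(A n)) := Set.isEmpty_coe_sort.mpr h
              exact le_of_eq_of_le (ciSup_of_empty (fun x : A n => #(↥(Yf x.1)))) bot_le
            · haveI : Nonempty (↥(A n)) := h.to_subtype
              exact ciSup_le' fun x => hYfκ x.1
          calc #(↥(A n)) * (⨆ x : A n, #(Yf x.1)) ≤ κ * κ := mul_le_mul' ih hs
            _ = κ := mul_eq_self hκinf
        calc #(↥(A (n + 1))) ≤ #(↥(A n)) + #(⋃ α ∈ A n, Yf α) := by
              rw [hAsucc]; exact mk_union_le _ _
          _ ≤ κ + κ := add_le_add ih hb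
          _ = κ := add_eq_self hκinf
  set X' : Set lam.ord.ToType := ⋃ n : ULift.{u} ℕ, A n.down with hX'def
  have hX'κ : #(↥X') ≤ κ := by
    rw [hX'def]
    refine le_trans (mk_iUnion_le (fun n : ULift.{u} ℕ => A n.down)) ?_
    have hs : (⨆ n : ULift.{u} ℕ, #(↥(A n.down))) ≤ κ := ciSup_le' fun n => hAκ n.down
    calc #(ULift.{u} ℕ) * (⨆ n : ULift.{u} ℕ, #(↥(A n.down))) ≤ ℵ₀ * κ :=
          mul_le_mul' Cardinal.mk_le_aleph0 hs
      _ ≤ κ * κ := mul_le_mul' hκinf le_rfl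
      _ = κ := mul_eq_self hκinf
  have hsubX' : p.X ⊆ X' := fun x hx => Set.mem_iUnion.2 ⟨⟨0⟩, hA0.symm ▸ Or.inl hx⟩
  have hβX' : β ∈ X' := Set.mem_iUnion.2 ⟨⟨0⟩, hA0.symm ▸ Or.inr (Or.inl rfl)⟩
  have hJX' : J p.X ∈ X' := Set.mem_iUnion.2 ⟨⟨0⟩, hA0.symm ▸ Or.inr (Or.inr rfl)⟩
  have hX'cl : ∀ Y : Set lam.ord.ToType, #Y ≤ κ → J Y ∈ X' → Y ⊆ X' := by
    intro Y hYκ hJY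
    obtain ⟨n, hn⟩ := Set.mem_iUnion.1 hJY
    have hstep : Y ⊆ A (n.down + 1) := by
      rw [hAsucc]
      intro y hy
      refine Or.inr (Set.mem_biUnion hn ?_)
      rw [hYuniq Y hYκ]; exact hy
    exact hstep.trans (fun x hx => Set.mem_iUnion.2 ⟨⟨n.down + 1⟩, hx⟩)
  have hX'P : X' ∈ Pdash κ J := ⟨hX'κ, hX'cl⟩
  -- the zero-extension map
  let ext : (↥p.X → Bool) → (↥X' → Bool) :=
    fun t a => if h : a.1 ∈ p.X then t ⟨a.1, h⟩ else false
  have hre : ∀ t : ↥p.X → Bool, restr hsubX' (ext t) = t := by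
    intro t
    funext a
    simp only [restr, ext, dif_pos a.2]
  refine ⟨⟨X', ext '' p.F, fun γ => (p.g γ).map ext⟩, ?_, ?_, hβX'⟩
  · refine ⟨hX'P, le_trans mk_image_le hFκ, ?_, ?_, ?_⟩
    · intro γ s hs
      simp only [Option.map_eq_some_iff] at hs
      obtain ⟨t, ht, rfl⟩ := hs
      exact Set.mem_image_of_mem ext (hgF γ t ht)
    · have hset : {γ | Option.map ext (p.g γ) ≠ none} = {γ | p.g γ ≠ none} := by
        ext γ; simp [Option.map_eq_none_iff]
      show #(↥{γ | Option.map ext (p.g γ) ≠ none}) ≤ κ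
      rw [hset]; exact hdom
    · intro _ τ hτreg hτκ Xs hXsP _ _ hU f hf
      -- find a stage containing p.X
      have hU' : (⋃ i ∈ Set.Iio τ.ord, Xs i) = X' := hU
      have hJmem : J p.X ∈ ⋃ i ∈ Set.Iio τ.ord, Xs i := by rw [hU]; exact hJX'
      obtain ⟨i0, hi0, hJin⟩ := Set.mem_iUnion₂.1 hJmem
      have hPsub : p.X ⊆ Xs i0 := (hXsP i0 hi0).2 p.X hXκ hJin
      have hsub0 : Xs i0 ⊆ X' := by
        rw [← hU']; exact Set.subset_biUnion_of_mem hi0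
      obtain ⟨s0, hs0F, hs0⟩ := hf i0 hi0 hsub0
      obtain ⟨t0, ht0F, rfl⟩ := hs0F
      refine ⟨t0, ht0F, ?_⟩
      funext a
      obtain ⟨j, hj, haj⟩ := Set.mem_iUnion₂.1 (by rw [hU]; exact a.2 :
        a.1 ∈ ⋃ i ∈ Set.Iio τ.ord, Xs i)
      by_cases hap : a.1 ∈ p.X
      · have ha0 : a.1 ∈ Xs i0 := hPsub hap
        exact congrFun hs0 ⟨a.1, ha0⟩
      · have hsubj : Xs j ⊆ X' := by
          rw [← hU']; exact Set.subset_biUnion_of_mem hj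
        obtain ⟨sj, hsjF, hsj⟩ := hf j hj hsubj
        obtain ⟨tj, htjF, rfl⟩ := hsjF
        have h1 : ext tj ⟨a.1, hsubj haj⟩ = f a := congrFun hsj ⟨a.1, haj⟩
        have h2 : ext tj ⟨a.1, hsubj haj⟩ = false := by simp [ext, dif_neg hap]
        have h3 : ext t0 a = false := by simp [ext, dif_neg hap]
        rw [h3, ← h1, h2]
  · refine ⟨Or.inr hJX', hsubX', ?_, ?_⟩
    · show restr hsubX' '' (ext '' p.F) = p.F
      rw [← Set.image_comp]
      have heq : restr hsubX' ∘ ext = id := funext hre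
      rw [heq, Set.image_id]
    · intro γ s hs
      exact ⟨ext s, by simp [hs], hre s⟩
end
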